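/- arXiv:2107.11138 — 4 statements merged into one kernel-verified Lean document; each statement's English description precedes it below -/
import Mathlib

section
/- For all integers n ≥ t ≥ 2, wsat(K_n, K_{1,t}) = C(t,2) = t(t−1)/2. -/
open MeasureTheory Filter

namespace WsatRandom

/-- `G'` contains a subgraph isomorphic to `H` that contains the edge `e`. -/
def ContainsCopyWithEdge {V W : Type*} (G' : SimpleGraph V) (H : SimpleGraph W)
    (e : Sym2 V) : Prop :=
  ∃ f : W → V, Function.Injective f ∧ (∀ a b, H.Adj a b → G'.Adj (f a) (f b)) ∧
    ∃ a b, H.Adj a b ∧ e = s(f a, f b)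

/-- `F` is a weakly `(G,H)`-saturated spanning subgraph of `G`: there is an ordering
`e_1, …, e_m` of the edges of `G` not in `F` such that adding them one by one, each newly
added edge lies in a copy of `H`. -/
def WeaklySaturated {V W : Type*} (G F : SimpleGraph V) (H : SimpleGraph W) : Prop :=
  F ≤ G ∧ ∃ es : List (Sym2 V), es.Nodup ∧
    (∀ e, e ∈ es ↔ e ∈ G.edgeSet \ F.edgeSet) ∧
    ∀ i : Fin es.length,
      ContainsCopyWithEdge
        (F ⊔ SimpleGraph.fromEdgeSet {e | e ∈ es.take ((i : ℕ) + 1)}) H (es.get i)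

/-- The weak saturation number: the minimum number of edges of a weakly `(G,H)`-saturated
spanning subgraph of `G`. -/
noncomputable def wsat {V W : Type*} (G : SimpleGraph V) (H : SimpleGraph W) : ℕ :=
  sInf {m | ∃ F, WeaklySaturated G F H ∧ F.edgeSet.ncard = m}

/-- Minimum degree of a graph. -/
noncomputable def minDeg {W : Type*} (H : SimpleGraph W) : ℕ :=
  sInf {d | ∃ v, d = {u | H.Adj v u}.ncard}

/-- The Bernoulli(p) measure on `Bool`. -/
noncomputable def bernoulliMeasure (p : ℝ) : Measure Bool :=
  ENNReal.ofReal p • Measure.dirac true + ENNReal.ofReal (1 - p) • Measure.dirac false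

/-- The product Bernoulli(p) measure on edge-indicator functions; its pushforward under
`graphOf` is the Erdős–Rényi random graph `G(n,p)`. -/
noncomputable def edgeMeasure (n : ℕ) (p : ℝ) : Measure (Sym2 (Fin n) → Bool) :=
  Measure.pi fun _ => bernoulliMeasure p

/-- The graph on `[n]` determined by an edge-indicator function. -/
def graphOf {n : ℕ} (ω : Sym2 (Fin n) → Bool) : SimpleGraph (Fin n) :=
  SimpleGraph.fromEdgeSet {e | ω e = true}

/-- The star `K_{1,t}`. -/
def star (t : ℕ) : SimpleGraph (Fin 1 ⊕ Fin t) :=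
  completeBipartiteGraph (Fin 1) (Fin t)


lemma star_adj {t : ℕ} (a b : Fin 1 ⊕ Fin t) :
    (star t).Adj a b ↔ (a.isLeft ∧ b.isRight ∨ a.isRight ∧ b.isLeft) := Iff.rfl

lemma containsCopy_star {n k : ℕ} (G' : SimpleGraph (Fin n)) (c w : Fin n)
    (g : Fin k → Fin n) (hginj : Function.Injective g) (hgw : ∀ i, g i ≠ w)
    (hadjw : G'.Adj c w) (hadjg : ∀ i, G'.Adj c (g i)) :
    ContainsCopyWithEdge G' (star (k + 1)) s(c, w) := by
  set g' : Fin (k + 1) → Fin n := Fin.cons w g with hg'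
  have hg'inj : Function.Injective g' := by
    intro i j hij
    induction i using Fin.cases <;> induction j using Fin.cases <;>
      simp_all [hg', Fin.cons_zero, Fin.cons_succ]
    · exact (hgw _ rfl).elim
    · exact hginj hij
  have hg'c : ∀ i, g' i ≠ c := by
    intro i
    induction i using Fin.cases
    · simpa [hg'] using hadjw.ne'
    · simpa [hg'] using (hadjg _).ne'
  have hadj' : ∀ i, G'.Adj c (g' i) := by
    intro i
    induction i using Fin.cases
    · simpa [hg'] using hadjw
    · simpa [hg'] using hadjg _
  refine ⟨Sum.elim (fun _ => c) g', ?_, ?_, Sum.inl 0, Sum.inr 0, ?_, ?_⟩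
  · intro a b hab
    match a, b with
    | Sum.inl x, Sum.inl y => exact congrArg Sum.inl (Subsingleton.elim x y)
    | Sum.inl x, Sum.inr j =>
      simp only [Sum.elim_inl, Sum.elim_inr] at hab; exact (hg'c j hab.symm).elim
    | Sum.inr i, Sum.inl y =>
      simp only [Sum.elim_inl, Sum.elim_inr] at hab; exact (hg'c i hab).elim
    | Sum.inr i, Sum.inr j =>
      simp only [Sum.elim_inr] at hab; exact congrArg Sum.inr (hg'inj hab)
  · intro a b hab
    rw [star_adj] at hab
    rcases hab with ⟨ha, hb⟩ | ⟨ha, hb⟩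
    · obtain ⟨x, rfl⟩ := Sum.isLeft_iff.mp ha
      obtain ⟨y, rfl⟩ := Sum.isRight_iff.mp hb
      simpa using hadj' y
    · obtain ⟨y, rfl⟩ := Sum.isRight_iff.mp ha
      obtain ⟨x, rfl⟩ := Sum.isLeft_iff.mp hb
      simpa using (hadj' y).symm
  · rw [star_adj]; simp
  · simp [hg']

lemma exists_center {n t : ℕ} {G' : SimpleGraph (Fin n)} {e : Sym2 (Fin n)}
    (h : ContainsCopyWithEdge G' (star t) e) :
    ∃ c w : Fin n, e = s(c, w) ∧ G'.Adj c w ∧ t ≤ {u | G'.Adj c u}.ncard := by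
  obtain ⟨f, hinj, hadj, a, b, hab, he⟩ := h
  have key : ∀ (x : Fin 1), t ≤ {u | G'.Adj (f (Sum.inl x)) u}.ncard := by
    intro x
    have hsub : Set.range (fun z : Fin t => f (Sum.inr z)) ⊆ {u | G'.Adj (f (Sum.inl x)) u} := by
      rintro _ ⟨z, rfl⟩
      exact hadj _ _ (by rw [star_adj]; simp)
    have hinj2 : Function.Injective (fun z : Fin t => f (Sum.inr z)) :=
      fun z₁ z₂ hz => Sum.inr_injective (hinj hz)
    have : (Set.range (fun z : Fin t => f (Sum.inr z))).ncard = t := by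
      rw [← Set.image_univ, Set.ncard_image_of_injective _ hinj2, Set.ncard_univ]
      simp
    calc t = _ := this.symm
      _ ≤ _ := Set.ncard_le_ncard hsub (Set.toFinite _)
  rw [star_adj] at hab
  rcases hab with ⟨ha, hb⟩ | ⟨ha, hb⟩
  · obtain ⟨x, rfl⟩ := Sum.isLeft_iff.mp ha
    obtain ⟨y, rfl⟩ := Sum.isRight_iff.mp hb
    exact ⟨f (Sum.inl x), f (Sum.inr y), he, hadj _ _ (by rw [star_adj]; simp), key x⟩
  · obtain ⟨y, rfl⟩ := Sum.isRight_iff.mp ha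
    obtain ⟨x, rfl⟩ := Sum.isLeft_iff.mp hb
    exact ⟨f (Sum.inl x), f (Sum.inr y), he.trans (Sym2.eq_swap),
      hadj _ _ (by rw [star_adj]; simp), key x⟩

/-- The graph after adding the first `i` missing edges. -/
def Pg {n : ℕ} (F : SimpleGraph (Fin n)) (es : List (Sym2 (Fin n))) (i : ℕ) :
    SimpleGraph (Fin n) :=
  F ⊔ SimpleGraph.fromEdgeSet {e | e ∈ es.take i}

/-- Degree at time `i`. -/
noncomputable def dg {n : ℕ} (F : SimpleGraph (Fin n)) (es : List (Sym2 (Fin n)))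
    (i : ℕ) (v : Fin n) : ℕ :=
  {u | (Pg F es i).Adj v u}.ncard

lemma nbr_succ {n : ℕ} (F : SimpleGraph (Fin n)) (es : List (Sym2 (Fin n)))
    {i : ℕ} (hi : i < es.length) {c w : Fin n} (he : es.get ⟨i, hi⟩ = s(c, w)) :
    {u | (Pg F es (i + 1)).Adj c u} ⊆ {u | (Pg F es i).Adj c u} ∪ {w} := by
  intro u hu
  rcases (SimpleGraph.sup_adj _ _ _ _).mp hu with hF | ⟨hmem, hne⟩
  · exact Or.inl (Or.inl hF)
  · obtain ⟨j, hj, hget⟩ := List.mem_take_iff_getElem.mp hmem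
    obtain ⟨hj1, hj2⟩ := lt_min_iff.mp hj
    rcases Nat.lt_or_ge j i with hji | hji
    · exact Or.inl (Or.inr ⟨List.mem_take_iff_getElem.mpr ⟨j, lt_min_iff.mpr ⟨hji, hj2⟩, hget⟩, hne⟩)
    · have hji' : j = i := le_antisymm (Nat.lt_succ_iff.mp hj1) hji
      subst hji'
      have : s(c, u) = s(c, w) := by
        rw [← hget]; rw [List.get_eq_getElem] at he; rw [he]
      exact Or.inr (Sym2.congr_right.mp this)

lemma step {n t : ℕ} (F : SimpleGraph (Fin n)) (es : List (Sym2 (Fin n)))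
    (hsat : ∀ i : Fin es.length,
      ContainsCopyWithEdge (F ⊔ SimpleGraph.fromEdgeSet {e | e ∈ es.take ((i : ℕ) + 1)})
        (star t) (es.get i))
    {i : ℕ} (hi : i < es.length) {x y : Fin n} (he : es.get ⟨i, hi⟩ = s(x, y)) :
    t - 1 ≤ dg F es i x ∨ t - 1 ≤ dg F es i y := by
  have h := hsat ⟨i, hi⟩
  obtain ⟨c, w, hecw, _, hcard⟩ := exists_center h
  have hsub := nbr_succ F es hi hecw
  have hcard' : t ≤ ({u | (Pg F es i).Adj c u} ∪ {w}).ncard := by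
    refine le_trans ?_ (Set.ncard_le_ncard hsub (Set.toFinite _))
    exact hcard
  have h2 : ({u | (Pg F es i).Adj c u} ∪ {w}).ncard ≤ dg F es i c + 1 := by
    refine (Set.ncard_union_le _ _).trans ?_
    simp [dg]
  have h3 : t - 1 ≤ dg F es i c := by omega
  rcases Sym2.eq_iff.mp (he.symm.trans hecw) with ⟨hx, hy⟩ | ⟨hx, hy⟩
  · exact Or.inl (hx ▸ h3)
  · exact Or.inr (hy ▸ h3)

lemma lower {n t : ℕ} (ht : 2 ≤ t) (hn : t ≤ n) (F : SimpleGraph (Fin n))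
    (hF : WeaklySaturated (⊤ : SimpleGraph (Fin n)) F (star t)) :
    Nat.choose t 2 ≤ F.edgeSet.ncard := by
  classical
  obtain ⟨hle, es, hnd, hiff, hsat⟩ := hF
  -- the final graph is complete
  have hfull : Pg F es es.length = ⊤ := by
    refine le_antisymm le_top ?_
    intro u v huv
    rw [SimpleGraph.top_adj] at huv
    by_cases hFe : F.Adj u v
    · exact Or.inl hFe
    · refine Or.inr ⟨?_, huv⟩
      show s(u, v) ∈ {e | e ∈ es.take es.length}
      rw [Set.mem_setOf_eq, List.take_length]
      exact (hiff _).mpr ⟨by simpa using huv, by rwa [SimpleGraph.mem_edgeSet]⟩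
  -- activation times
  set a : Fin n → ℕ := fun v => sInf {i | t - 1 ≤ dg F es i v} with ha
  have hane : ∀ v, {i | t - 1 ≤ dg F es i v}.Nonempty := by
    intro v
    refine ⟨es.length, ?_⟩
    show t - 1 ≤ dg F es es.length v
    have huniv : (Set.univ : Set (Fin n)) = insert v {u | (Pg F es es.length).Adj v u} := by
      ext u
      simp [hfull, eq_comm]
      tauto
    have hcard : n = dg F es es.length v + 1 := by
      have h1 : (Set.univ : Set (Fin n)).ncard = n := by
        rw [Set.ncard_univ]; simp
      rw [huniv, Set.ncard_insert_of_notMem (by simp) (Set.toFinite _)] at h1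
      have hdgeq : dg F es es.length v = {u | (Pg F es es.length).Adj v u}.ncard := rfl
      omega
    omega
  have ha1 : ∀ v, t - 1 ≤ dg F es (a v) v := fun v => Nat.sInf_mem (hane v)
  have ha2 : ∀ v i, i < a v → ¬ (t - 1 ≤ dg F es i v) := by
    intro v i hi
    have := Nat.notMem_of_lt_sInf (s := {i | t - 1 ≤ dg F es i v}) hi
    simpa using this
  -- sort vertices by activation time
  set σ := Tuple.sort a with hσ
  set vtx : Fin n → Fin n := fun k => σ k with hvtx
  have hmono : Monotone (a ∘ σ) := Tuple.monotone_sort a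
  have hvinj : Function.Injective vtx := σ.injective
  have hkey : ∀ j k : Fin n, a (vtx k) < a (vtx j) → k < j := by
    intro j k h
    by_contra hc
    push_neg at hc
    exact absurd (hmono hc) (not_le.mpr h)
  -- an added edge at an inactive vertex goes to an earlier-activated vertex
  have hedge : ∀ (jn : Fin n) (u : Fin n), (Pg F es (a (vtx jn))).Adj (vtx jn) u →
      ¬ F.Adj (vtx jn) u → ∃ k : Fin n, vtx k = u ∧ k < jn := by
    intro jn u hadj hnF
    rcases (SimpleGraph.sup_adj _ _ _ _).mp hadj with hF' | ⟨hmem, hne⟩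
    · exact absurd hF' hnF
    · obtain ⟨i, hj, hget⟩ := List.mem_take_iff_getElem.mp hmem
      obtain ⟨hia, hi⟩ := lt_min_iff.mp hj
      have hgi : es.get ⟨i, hi⟩ = s(vtx jn, u) := by
        rw [List.get_eq_getElem]; exact hget
      rcases step F es hsat hi hgi with h1 | h1
      · exact absurd h1 (ha2 _ _ hia)
      · have hau : a u ≤ i := Nat.sInf_le h1
        refine ⟨σ.symm u, by simp [hvtx], ?_⟩
        refine hkey jn (σ.symm u) ?_
        have : vtx (σ.symm u) = u := by simp [hvtx]
        rw [this]
        omega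
  -- the disjoint families of F-edges
  set S : Fin t → Set (Sym2 (Fin n)) := fun j =>
    {e | e ∈ F.edgeSet ∧ ∃ k : Fin n, Fin.castLE hn j < k ∧ e = s(vtx (Fin.castLE hn j), vtx k)}
    with hS
  have hcount : ∀ j : Fin t, t - 1 - (j : ℕ) ≤ (S j).ncard := by
    intro j
    set jn : Fin n := Fin.castLE hn j with hjn
    set N := {u | (Pg F es (a (vtx jn))).Adj (vtx jn) u} with hN
    set Wt := vtx '' {k : Fin n | k < jn} with hW
    have hNW : ∀ u ∈ N \ Wt, s(vtx jn, u) ∈ S j := by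
      rintro u ⟨huN, huW⟩
      have huN' : (Pg F es (a (vtx jn))).Adj (vtx jn) u := huN
      have hune : u ≠ vtx jn := huN'.ne'
      set k : Fin n := σ.symm u with hk
      have hku : vtx k = u := by simp [hvtx, hk]
      have hkne : k ≠ jn := fun h => hune (by rw [← hku, h])
      have hknlt : ¬ k < jn := fun h => huW ⟨k, h, hku⟩
      have hjk : jn < k := (not_lt.mp hknlt).lt_of_ne (Ne.symm hkne)
      by_cases hF' : F.Adj (vtx jn) u
      · exact ⟨F.mem_edgeSet.mpr hF', k, hjk, by rw [hku]⟩
      · obtain ⟨k', hk'u, hk'lt⟩ := hedge jn u huN hF'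
        have : k' = k := hvinj (by rw [hk'u, hku])
        exact absurd (this ▸ hk'lt) hknlt
    have hinjOn : Set.InjOn (fun u => s(vtx jn, u)) (N \ Wt) := by
      intro u₁ _ u₂ _ h
      exact Sym2.congr_right.mp h
    have h1 : N.ncard ≤ (N \ Wt).ncard + Wt.ncard := by
      refine le_trans (Set.ncard_le_ncard ?_ (Set.toFinite _)) (Set.ncard_union_le _ _)
      rw [Set.diff_union_self]
      exact Set.subset_union_left
    have h2 : Wt.ncard ≤ (j : ℕ) := by
      refine le_trans (Set.ncard_image_le (Set.toFinite _)) ?_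
      have : {k : Fin n | k < jn} = Set.Iio jn := rfl
      rw [this, ← Finset.coe_Iio, Set.ncard_coe_finset, Fin.card_Iio]
      simp [hjn]
    have h3 : (N \ Wt).ncard ≤ (S j).ncard :=
      Set.ncard_le_ncard_of_injOn _ hNW hinjOn (Set.toFinite _)
    have h4 : t - 1 ≤ N.ncard := ha1 (vtx jn)
    omega
  -- the families are pairwise disjoint
  have hdisj : ∀ j j' : Fin t, j ≠ j' → Disjoint (S j) (S j') := by
    intro j j' hne
    rw [Set.disjoint_left]
    rintro e ⟨_, k, hk, rfl⟩ ⟨_, k', hk', heq⟩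
    rcases Sym2.eq_iff.mp heq with ⟨h1, h2⟩ | ⟨h1, h2⟩
    · exact hne (Fin.castLE_injective hn (hvinj h1))
    · have e1 : Fin.castLE hn j = k' := hvinj h1
      have e2 : k = Fin.castLE hn j' := hvinj h2
      rw [← e1] at hk'
      rw [e2] at hk
      exact absurd (hk.trans hk') (lt_irrefl _)
  -- assemble
  set Sf : Fin t → Finset (Sym2 (Fin n)) := fun j => (Set.toFinite (S j)).toFinset with hSf
  have hcardSf : ∀ j, (Sf j).card = (S j).ncard := fun j => (Set.ncard_eq_toFinset_card _ _).symm
  have hdisj' : ∀ j ∈ Finset.univ, ∀ j' ∈ Finset.univ, j ≠ j' → Disjoint (Sf j) (Sf j') := by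
    intro j _ j' _ hne
    rw [Finset.disjoint_left]
    intro e he he'
    rw [hSf, Set.Finite.mem_toFinset] at he he'
    exact (Set.disjoint_left.mp (hdisj j j' hne)) he he'
  have hsubF : Finset.univ.biUnion Sf ⊆ (Set.toFinite F.edgeSet).toFinset := by
    intro e he
    rw [Finset.mem_biUnion] at he
    obtain ⟨j, _, hj⟩ := he
    rw [hSf, Set.Finite.mem_toFinset] at hj
    rw [Set.Finite.mem_toFinset]
    exact hj.1
  have hsum : ∑ j : Fin t, (Sf j).card ≤ F.edgeSet.ncard := by
    rw [← Finset.card_biUnion hdisj']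
    calc _ ≤ ((Set.toFinite F.edgeSet).toFinset).card := Finset.card_le_card hsubF
      _ = F.edgeSet.ncard := (Set.ncard_eq_toFinset_card _ _).symm
  have hgauss : ∑ j : Fin t, (t - 1 - (j : ℕ)) = Nat.choose t 2 := by
    rw [Fin.sum_univ_eq_sum_range (fun j => t - 1 - j) t]
    have h0 : ∑ j ∈ Finset.range t, (t - 1 - j) = ∑ j ∈ Finset.range t, j :=
      Finset.sum_range_reflect (fun j => j) t
    rw [h0, Nat.choose_two_right]
    have := Finset.sum_range_id_mul_two t
    omega
  have hfin : ∑ j : Fin t, (t - 1 - (j : ℕ)) ≤ ∑ j : Fin t, (Sf j).card :=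
    Finset.sum_le_sum (fun j _ => (hcardSf j) ▸ hcount j)
  omega
/-- The clique on the first `t` vertices. -/
def Kt (n t : ℕ) : SimpleGraph (Fin n) where
  Adj u v := u ≠ v ∧ (u : ℕ) < t ∧ (v : ℕ) < t
  symm := ⟨fun u v ⟨h1, h2, h3⟩ => ⟨h1.symm, h3, h2⟩⟩
  loopless := ⟨fun u h => h.1 rfl⟩

lemma Kt_edgeSet_ncard {n t : ℕ} (hn : t ≤ n) :
    (Kt n t).edgeSet.ncard = Nat.choose t 2 := by
  classical
  have hsub2 : ∀ e' ∈ (⊤ : SimpleGraph (Fin t)).edgeSet,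
      Sym2.map (Fin.castLE hn) e' ∈ (Kt n t).edgeSet := by
    intro e'
    induction e' using Sym2.ind with
    | _ x y =>
      intro he'
      rw [SimpleGraph.mem_edgeSet, SimpleGraph.top_adj] at he'
      rw [Sym2.map_pair_eq, SimpleGraph.mem_edgeSet]
      exact ⟨fun h => he' (Fin.castLE_injective hn h), x.2, y.2⟩
  have himg : (Kt n t).edgeSet =
      Sym2.map (Fin.castLE hn) '' (⊤ : SimpleGraph (Fin t)).edgeSet := by
    refine Set.Subset.antisymm ?_ ?_
    · intro e
      induction e using Sym2.ind with
      | _ u v =>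
        intro hmem
        rw [SimpleGraph.mem_edgeSet] at hmem
        obtain ⟨hne, hu, hv⟩ := hmem
        refine ⟨s(⟨(u : ℕ), hu⟩, ⟨(v : ℕ), hv⟩), ?_, ?_⟩
        · rw [SimpleGraph.mem_edgeSet, SimpleGraph.top_adj]
          intro h
          have h' := congrArg Fin.val h
          exact hne (Fin.ext h')
        · rw [Sym2.map_pair_eq]
          congr 1 <;> exact Fin.ext rfl
    · rintro _ ⟨e', he', rfl⟩
      exact hsub2 e' he'
  rw [himg, Set.ncard_image_of_injective _ (Sym2.map.injective (Fin.castLE_injective hn))]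
  have h2 := SimpleGraph.card_edgeFinset_top_eq_card_choose_two (V := Fin t)
  rw [SimpleGraph.edgeFinset, ← Set.ncard_eq_toFinset_card'] at h2
  rw [h2, Fintype.card_fin]

/-- The rank of an edge, used to order the added edges. -/
def rk (n t : ℕ) : Sym2 (Fin n) → ℕ :=
  Sym2.lift ⟨fun a b => if min (a : ℕ) (b : ℕ) < t then max (a : ℕ) (b : ℕ)
    else n + max (a : ℕ) (b : ℕ), by intro a b; simp [min_comm, max_comm]⟩

lemma rk_mk {n t : ℕ} (a b : Fin n) :
    rk n t s(a, b) = if min (a : ℕ) (b : ℕ) < t then max (a : ℕ) (b : ℕ)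
      else n + max (a : ℕ) (b : ℕ) := by
  simp [rk]

lemma upper {n t : ℕ} (ht : 2 ≤ t) (hn : t ≤ n) :
    ∃ F : SimpleGraph (Fin n), WeaklySaturated (⊤ : SimpleGraph (Fin n)) F (star t) ∧
      F.edgeSet.ncard = Nat.choose t 2 := by
  classical
  obtain ⟨k, rfl⟩ : ∃ k, t = k + 1 := ⟨t - 1, by omega⟩
  set F := Kt n (k + 1) with hF
  refine ⟨F, ⟨le_top, ?_⟩, Kt_edgeSet_ncard hn⟩
  set miss : Set (Sym2 (Fin n)) := (⊤ : SimpleGraph (Fin n)).edgeSet \ F.edgeSet with hmiss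
  set L : List (Sym2 (Fin n)) := (Set.toFinite miss).toFinset.toList with hL
  set es : List (Sym2 (Fin n)) :=
    L.mergeSort (fun e e' => decide (rk n (k + 1) e ≤ rk n (k + 1) e')) with hes
  have hperm : es.Perm L := List.mergeSort_perm L _
  have hmemL : ∀ e, e ∈ L ↔ e ∈ miss := by
    intro e
    rw [hL, Finset.mem_toList, Set.Finite.mem_toFinset]
  have hmem : ∀ e, e ∈ es ↔ e ∈ miss := fun e => (hperm.mem_iff).trans (hmemL e)
  have hnd : es.Nodup := hperm.nodup_iff.mpr (Finset.nodup_toList _)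
  have htrans : ∀ a b c : Sym2 (Fin n),
      (decide (rk n (k + 1) a ≤ rk n (k + 1) b)) = true →
      (decide (rk n (k + 1) b ≤ rk n (k + 1) c)) = true →
      (decide (rk n (k + 1) a ≤ rk n (k + 1) c)) = true := by
    intro a b c hab hbc
    simp only [decide_eq_true_eq] at *
    omega
  have htot : ∀ a b : Sym2 (Fin n),
      ((decide (rk n (k + 1) a ≤ rk n (k + 1) b)) ||
        (decide (rk n (k + 1) b ≤ rk n (k + 1) a))) = true := by
    intro a b
    simpa using le_total _ _
  have hpw := List.pairwise_mergeSort
    (le := fun e e' => decide (rk n (k + 1) e ≤ rk n (k + 1) e')) htrans htot L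
  rw [← hes] at hpw
  have hsorted : ∀ i j : Fin es.length, i < j →
      rk n (k + 1) (es.get i) ≤ rk n (k + 1) (es.get j) := by
    intro i j hij
    have := List.pairwise_iff_get.mp hpw i j hij
    simpa using this
  -- the ordered-pair construction
  have hord : ∀ (pre : Set (Sym2 (Fin n))) (x y : Fin n), (x : ℕ) < (y : ℕ) →
      s(x, y) ∈ miss → s(x, y) ∈ pre →
      (∀ e', e' ∈ miss → rk n (k + 1) e' < rk n (k + 1) s(x, y) → e' ∈ pre) →
      ContainsCopyWithEdge (F ⊔ SimpleGraph.fromEdgeSet pre) (star (k + 1)) s(x, y) := by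
    intro pre x y hlt hm hp hl
    have hxyne : x ≠ y := fun h => by rw [h] at hlt; omega
    have hAdjxy : (F ⊔ SimpleGraph.fromEdgeSet pre).Adj x y := by
      rw [SimpleGraph.sup_adj]
      right
      rw [SimpleGraph.fromEdgeSet_adj]
      exact ⟨hp, hxyne⟩
    have hnotF : ¬ ((x : ℕ) < k + 1 ∧ (y : ℕ) < k + 1) := by
      rintro ⟨h1, h2⟩
      exact hm.2 ((F.mem_edgeSet).mpr ⟨hxyne, h1, h2⟩)
    by_cases hxk : (x : ℕ) < k + 1
    · -- center x < t, other endpoint y outside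
      have hyk : k + 1 ≤ (y : ℕ) := by
        by_contra hc
        push_neg at hc
        exact hnotF ⟨hxk, hc⟩
      set g : Fin k → Fin n := fun i0 =>
        ⟨if (i0 : ℕ) < (x : ℕ) then (i0 : ℕ) else (i0 : ℕ) + 1,
          by have h1 := i0.isLt; have h2 := x.isLt; split <;> omega⟩ with hg
      have hgval : ∀ i0 : Fin k,
          (g i0 : ℕ) = if (i0 : ℕ) < (x : ℕ) then (i0 : ℕ) else (i0 : ℕ) + 1 :=
        fun i0 => rfl
      refine containsCopy_star _ x y g ?_ ?_ hAdjxy ?_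
      · intro i0 j0 h
        have h' := congrArg Fin.val h
        rw [hgval, hgval] at h'
        apply Fin.ext
        split_ifs at h' <;> omega
      · intro i0 h
        have h' := congrArg Fin.val h
        rw [hgval] at h'
        have h1 := i0.isLt
        split_ifs at h' <;> omega
      · intro i0
        rw [SimpleGraph.sup_adj]
        left
        have h1 := i0.isLt
        refine ⟨?_, hxk, ?_⟩
        · intro h
          have h' := congrArg Fin.val h
          rw [hgval] at h'
          split_ifs at h' <;> omega
        · rw [hgval]
          split <;> omega
    · -- both endpoints outside, center x
      push_neg at hxk
      set g : Fin k → Fin n := fun i0 => ⟨(i0 : ℕ), by have := i0.isLt; omega⟩ with hg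
      have hgval : ∀ i0 : Fin k, (g i0 : ℕ) = (i0 : ℕ) := fun i0 => rfl
      refine containsCopy_star _ x y g ?_ ?_ hAdjxy ?_
      · intro i0 j0 h
        have h' := congrArg Fin.val h
        rw [hgval, hgval] at h'
        exact Fin.ext h'
      · intro i0 h
        have h' := congrArg Fin.val h
        rw [hgval] at h'
        have h1 := i0.isLt
        omega
      · intro i0
        have h1 := i0.isLt
        have hxn := x.isLt
        rw [SimpleGraph.sup_adj]
        right
        rw [SimpleGraph.fromEdgeSet_adj]
        constructor
        · refine hl s(x, g i0) ?_ ?_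
          · constructor
            · rw [SimpleGraph.mem_edgeSet, SimpleGraph.top_adj]
              intro h
              have h' := congrArg Fin.val h
              rw [hgval] at h'
              omega
            · intro hFmem
              rw [SimpleGraph.mem_edgeSet] at hFmem
              obtain ⟨_, hx1, _⟩ := hFmem
              omega
          · rw [rk_mk, rk_mk, hgval]
            simp only [min_def, max_def]
            split_ifs <;> omega
        · intro h
          have h' := congrArg Fin.val h
          rw [hgval] at h'
          omega
  -- the general construction
  have hkey : ∀ (pre : Set (Sym2 (Fin n))) (e : Sym2 (Fin n)), e ∈ miss → e ∈ pre →
      (∀ e', e' ∈ miss → rk n (k + 1) e' < rk n (k + 1) e → e' ∈ pre) →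
      ContainsCopyWithEdge (F ⊔ SimpleGraph.fromEdgeSet pre) (star (k + 1)) e := by
    intro pre e
    induction e using Sym2.ind with
    | _ x y =>
      intro hm hp hl
      have hxyne : x ≠ y := by
        have h1 := hm.1
        rw [SimpleGraph.mem_edgeSet, SimpleGraph.top_adj] at h1
        exact h1
      rcases Nat.lt_trichotomy (x : ℕ) (y : ℕ) with h | h | h
      · exact hord pre x y h hm hp hl
      · exact absurd (Fin.ext h) hxyne
      · have hswap : s(x, y) = s(y, x) := Sym2.eq_swap
        rw [hswap] at hm hp hl ⊢
        exact hord pre y x h hm hp hl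
  refine ⟨es, hnd, fun e => hmem e, ?_⟩
  intro i
  refine hkey _ _ ((hmem _).mp (by rw [List.get_eq_getElem]; exact List.getElem_mem i.isLt)) ?_ ?_
  · show es.get i ∈ {e' | e' ∈ es.take ((i : ℕ) + 1)}
    rw [Set.mem_setOf_eq]
    exact List.mem_take_iff_getElem.mpr
      ⟨(i : ℕ), lt_min_iff.mpr ⟨Nat.lt_succ_self _, i.isLt⟩, (List.get_eq_getElem (l := es) (i := i)).symm⟩
  · intro e' hm' hrk
    have h1 : e' ∈ es := (hmem e').mpr hm'
    obtain ⟨j, hj⟩ := List.mem_iff_get.mp h1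
    have hji : (j : ℕ) < (i : ℕ) + 1 := by
      by_contra hc
      push_neg at hc
      have hij : i < j := by rw [Fin.lt_def]; omega
      have h2 := hsorted i j hij
      rw [hj] at h2
      omega
    rw [Set.mem_setOf_eq, ← hj]
    exact List.mem_take_iff_getElem.mpr
      ⟨(j : ℕ), lt_min_iff.mpr ⟨hji, j.isLt⟩, (List.get_eq_getElem (l := es) (i := j)).symm⟩


/-- `wsat(K_n, K_{1,t}) = C(t,2) = t(t-1)/2` for `n ≥ t ≥ 2`. -/
theorem stmt_9 (n t : ℕ) (ht : 2 ≤ t) (hn : t ≤ n) :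
    wsat (⊤ : SimpleGraph (Fin n)) (star t) = Nat.choose t 2 ∧
      Nat.choose t 2 = t * (t - 1) / 2 := by
  constructor
  · obtain ⟨F, hsat, hcard⟩ := upper ht hn
    have hmem : Nat.choose t 2 ∈ {m | ∃ F, WeaklySaturated (⊤ : SimpleGraph (Fin n)) F (star t) ∧
        F.edgeSet.ncard = m} := ⟨F, hsat, hcard⟩
    unfold wsat
    refine le_antisymm (Nat.sInf_le hmem) (le_csInf ⟨_, hmem⟩ ?_)
    rintro m ⟨F', hs', rfl⟩
    exact lower ht hn F' hs'
  · exact Nat.choose_two_right t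
end WsatRandom
end

section
/- Let t ≥ 3 be an integer and let G be a connected graph on [n] with wsat(G, K_{1,t}) = C(t,2). If G has at least μ vertices of degree at least t−1, where μ > C(t+1,2), then G contains a saturating structure (with parameter t) of length μ whose core has size at most C(t+1,2). -/
open MeasureTheory Filter

namespace WsatRandom

/-- `F` together with the vertex ordering `v : Fin x → V` is a saturating structure
(with parameter `t`) of length `x` and core size `y` in `G`: `t ≤ y < x`, `F` is a subgraph
of `G` with all edges among the listed vertices, and every vertex `v i` with `y ≤ i` has
exactly `t-1` neighbors in `F` among the previous vertices. -/
def IsSaturatingStructure {V : Type*} (G : SimpleGraph V) (t x y : ℕ)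
    (F : SimpleGraph V) (v : Fin x → V) : Prop :=
  t ≤ y ∧ y < x ∧ F ≤ G ∧ Function.Injective v ∧
    (∀ a b : V, F.Adj a b → a ∈ Set.range v ∧ b ∈ Set.range v) ∧
    ∀ i : Fin x, y ≤ (i : ℕ) →
      {j : Fin x | (j : ℕ) < (i : ℕ) ∧ F.Adj (v i) (v j)}.ncard = t - 1

namespace Stmt14Aux

open SimpleGraph

variable {n : ℕ} (t : ℕ) (F0 : SimpleGraph (Fin n)) (es : List (Sym2 (Fin n)))

/-- step graphs -/
def Gi (i : ℕ) : SimpleGraph (Fin n) :=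
  F0 ⊔ SimpleGraph.fromEdgeSet {e | e ∈ es.take i}

lemma Gi_zero : Gi F0 es 0 = F0 := by
  simp [Gi]

lemma Gi_mono {i j : ℕ} (h : i ≤ j) : Gi F0 es i ≤ Gi F0 es j := by
  apply sup_le_sup_left
  apply SimpleGraph.fromEdgeSet_mono
  intro e he
  have : es.take i = (es.take j).take i := by rw [List.take_take, min_eq_left h]
  rw [Set.mem_setOf_eq, this] at he
  exact List.take_subset _ _ he

lemma mem_take_succ_iff {α : Type*} (l : List α) (i : ℕ) (e : α) :
    e ∈ l.take (i + 1) ↔ e ∈ l.take i ∨ ∃ h : i < l.length, e = l.get ⟨i, h⟩ := by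
  rw [List.take_succ, List.mem_append]
  constructor
  · rintro (h | h)
    · exact Or.inl h
    · right
      rcases Option.mem_toList.mp h with h'
      have hlt : i < l.length := by
        by_contra hc
        rw [List.getElem?_eq_none (le_of_not_gt hc)] at h'
        simp at h'
      refine ⟨hlt, ?_⟩
      rw [List.getElem?_eq_getElem hlt] at h'
      exact (Option.mem_some_iff.mp h').symm
  · rintro (h | ⟨h, rfl⟩)
    · exact Or.inl h
    · right
      rw [Option.mem_toList, List.getElem?_eq_getElem h]
      rfl

lemma Gi_adj_succ {i : ℕ} {a b : Fin n} :
    (Gi F0 es (i + 1)).Adj a b ↔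
      (Gi F0 es i).Adj a b ∨ ∃ h : i < es.length, s(a, b) = es.get ⟨i, h⟩ ∧ a ≠ b := by
  simp only [Gi, sup_adj, fromEdgeSet_adj, Set.mem_setOf_eq, mem_take_succ_iff]
  constructor
  · rintro (h | ⟨(h | ⟨hl, he⟩), hne⟩)
    · exact Or.inl (Or.inl h)
    · exact Or.inl (Or.inr ⟨h, hne⟩)
    · exact Or.inr ⟨hl, he, hne⟩
  · rintro ((h | ⟨h, hne⟩) | ⟨hl, he, hne⟩)
    · exact Or.inl h
    · exact Or.inr ⟨Or.inl h, hne⟩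
    · exact Or.inr ⟨Or.inr ⟨hl, he⟩, hne⟩


/-- any copy of the star with an edge gives a center of degree ≥ t which is an endpoint -/
lemma center_of_copy {n t : ℕ} {G' : SimpleGraph (Fin n)} {e : Sym2 (Fin n)}
    (h : ContainsCopyWithEdge G' (star t) e) :
    ∃ c d : Fin n, e = s(c, d) ∧ t ≤ (G'.neighborSet c).ncard := by
  obtain ⟨f, hf, hadj, a, b, hab, he⟩ := h
  set c := f (Sum.inl 0) with hc
  have hnb : ∀ y : Fin t, f (Sum.inr y) ∈ G'.neighborSet c := by
    intro y
    exact hadj _ _ (by simp [star])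
  have hcard : t ≤ (G'.neighborSet c).ncard := by
    have hsub : Set.range (fun y : Fin t => f (Sum.inr y)) ⊆ G'.neighborSet c := by
      rintro _ ⟨y, rfl⟩; exact hnb y
    have hinj : Function.Injective (fun y : Fin t => f (Sum.inr y)) :=
      fun y z hyz => Sum.inr_injective (hf hyz)
    calc t = (Set.univ : Set (Fin t)).ncard := by
              rw [Set.ncard_univ]; simp
      _ = (Set.range (fun y : Fin t => f (Sum.inr y))).ncard := by
              rw [← Set.image_univ, Set.ncard_image_of_injective _ hinj]
      _ ≤ _ := Set.ncard_le_ncard hsub (Set.toFinite _)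
  -- e is an edge of the star copy: one endpoint is the center
  have : (a.isLeft ∧ b.isRight) ∨ (a.isRight ∧ b.isLeft) := by
    simpa [star] using hab
  rcases this with ⟨ha, hb⟩ | ⟨ha, hb⟩
  · obtain ⟨x, rfl⟩ := Sum.isLeft_iff.mp ha
    obtain ⟨y, rfl⟩ := Sum.isRight_iff.mp hb
    have hx : x = 0 := Subsingleton.elim _ _
    subst hx
    exact ⟨c, f (Sum.inr y), he, hcard⟩
  · obtain ⟨y, rfl⟩ := Sum.isRight_iff.mp ha
    obtain ⟨x, rfl⟩ := Sum.isLeft_iff.mp hb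
    have hx : x = 0 := Subsingleton.elim _ _
    subst hx
    refine ⟨c, f (Sum.inr y), ?_, hcard⟩
    rw [he, Sym2.eq_swap]


def Rich (i : ℕ) (v : Fin n) : Prop :=
  t - 1 ≤ ((Gi F0 es i).neighborSet v).ncard

noncomputable def tau (v : Fin n) : ℕ := sInf {i | Rich t F0 es i v}

lemma neighborSet_mono {i j : ℕ} (h : i ≤ j) (v : Fin n) :
    (Gi F0 es i).neighborSet v ⊆ (Gi F0 es j).neighborSet v :=
  fun _ hu => Gi_mono F0 es h hu

lemma rich_mono {i j : ℕ} (h : i ≤ j) {v : Fin n} (hr : Rich t F0 es i v) :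
    Rich t F0 es j v :=
  le_trans hr (Set.ncard_le_ncard (neighborSet_mono F0 es h v) (Set.toFinite _))

lemma new_adj {i : ℕ} {a b : Fin n} (h1 : (Gi F0 es (i + 1)).Adj a b)
    (h2 : ¬ (Gi F0 es i).Adj a b) : ∃ h : i < es.length, s(a, b) = es.get ⟨i, h⟩ := by
  rcases (Gi_adj_succ F0 es).mp h1 with h | ⟨h, he, _⟩
  · exact absurd h h2
  · exact ⟨h, he⟩

lemma ncard_nbhd_succ_le (i : ℕ) (v : Fin n) :
    ((Gi F0 es (i + 1)).neighborSet v).ncard ≤ ((Gi F0 es i).neighborSet v).ncard + 1 := by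
  classical
  set S : Set (Fin n) := {u | ∃ h : i < es.length, s(v, u) = es.get ⟨i, h⟩} with hS
  have hsub : (Gi F0 es (i + 1)).neighborSet v ⊆ (Gi F0 es i).neighborSet v ∪ S := by
    intro u hu
    by_cases h : (Gi F0 es i).Adj v u
    · exact Or.inl h
    · rcases new_adj F0 es hu h with ⟨hl, he⟩
      exact Or.inr ⟨hl, he⟩
  have hS1 : S.ncard ≤ 1 := by
    rw [Set.ncard_le_one (Set.toFinite _)]
    rintro a ⟨ha, hea⟩ b ⟨hb, heb⟩
    have : s(v, a) = s(v, b) := by rw [hea, heb]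
    exact Sym2.congr_right.mp this
  calc ((Gi F0 es (i + 1)).neighborSet v).ncard
      ≤ ((Gi F0 es i).neighborSet v ∪ S).ncard := Set.ncard_le_ncard hsub (Set.toFinite _)
    _ ≤ ((Gi F0 es i).neighborSet v).ncard + S.ncard := Set.ncard_union_le _ _
    _ ≤ _ := by omega


lemma tau_mem {v : Fin n} {N : ℕ} (hv : Rich t F0 es N v) :
    Rich t F0 es (tau t F0 es v) v :=
  Nat.sInf_mem (⟨N, hv⟩ : {i | Rich t F0 es i v}.Nonempty)

lemma tau_le {v : Fin n} {N : ℕ} (hv : Rich t F0 es N v) : tau t F0 es v ≤ N :=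
  Nat.sInf_le (show N ∈ {i | Rich t F0 es i v} from hv)

lemma not_rich_of_lt_tau {v : Fin n} {j : ℕ} (hj : j < tau t F0 es v) :
    ¬ Rich t F0 es j v :=
  Nat.notMem_of_lt_sInf (s := {i | Rich t F0 es i v}) hj

lemma tau_pos (ht : 3 ≤ t) {v : Fin n} (h0 : (F0.neighborSet v).ncard = 0)
    {N : ℕ} (hv : Rich t F0 es N v) : 0 < tau t F0 es v := by
  rcases Nat.eq_zero_or_pos (tau t F0 es v) with h | h
  · exfalso
    have := tau_mem t F0 es hv
    rw [h] at this
    unfold Rich at this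
    rw [Gi_zero, h0] at this
    omega
  · exact h

lemma exact_count (ht : 3 ≤ t) {v : Fin n} (h0 : (F0.neighborSet v).ncard = 0)
    {N : ℕ} (hv : Rich t F0 es N v) :
    ((Gi F0 es (tau t F0 es v)).neighborSet v).ncard = t - 1 := by
  have hpos := tau_pos t F0 es ht h0 hv
  set i := tau t F0 es v - 1 with hi
  have hieq : i + 1 = tau t F0 es v := by omega
  have hnr : ¬ Rich t F0 es i v := not_rich_of_lt_tau t F0 es (by omega)
  have hr := tau_mem t F0 es hv
  have hle := ncard_nbhd_succ_le F0 es i v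
  rw [hieq] at hle
  unfold Rich at hnr hr
  omega


lemma exists_Bk {α : Type*} [DecidableEq α] (T : Finset α) (τ : α → ℕ) (k : ℕ)
    (hk : k < T.card) :
    k + 1 ≤ (T.filter fun v => (T.filter fun u => τ u < τ v).card ≤ k).card := by
  classical
  by_contra h
  push_neg at h
  have hcard : (T.filter fun v => (T.filter fun u => τ u < τ v).card ≤ k).card ≤ k := by omega
  set B := T.filter fun v => (T.filter fun u => τ u < τ v).card ≤ k with hB
  have hBsub : B ⊆ T := Finset.filter_subset _ _
  have hne : (T \ B).Nonempty := by
    rw [← Finset.card_pos, Finset.card_sdiff_of_subset hBsub]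
    omega
  obtain ⟨u, hu, hmin⟩ := Finset.exists_min_image (T \ B) τ hne
  have husub : T.filter (fun w => τ w < τ u) ⊆ B := by
    intro w hw
    rw [Finset.mem_filter] at hw
    by_contra hwB
    have : w ∈ T \ B := Finset.mem_sdiff.mpr ⟨hw.1, hwB⟩
    exact absurd (hmin w this) (by omega)
  have hcu : (T.filter fun w => τ w < τ u).card ≤ k :=
    le_trans (Finset.card_le_card husub) hcard
  have huB : u ∈ B := by
    rw [hB, Finset.mem_filter]
    exact ⟨(Finset.mem_sdiff.mp hu).1, hcu⟩
  exact (Finset.mem_sdiff.mp hu).2 huB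

lemma sum_range_succ_choose (m : ℕ) :
    ∑ k ∈ Finset.range m, (k + 1) = Nat.choose (m + 1) 2 := by
  induction m with
  | zero => simp
  | succ m ih =>
      have h : Nat.choose (m + 1 + 1) 2 = Nat.choose (m + 1) 1 + Nat.choose (m + 1) 2 :=
        Nat.choose_succ_succ (m + 1) 1
      rw [Finset.sum_range_succ, ih, h, Nat.choose_one_right]
      omega

lemma choose_succ_two (m : ℕ) : Nat.choose (m + 1) 2 = Nat.choose m 2 + m := by
  have h : Nat.choose (m + 1) 2 = Nat.choose m 1 + Nat.choose m 2 :=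
    Nat.choose_succ_succ m 1
  rw [Nat.choose_one_right] at h
  omega

lemma support_bound {α : Type*} [DecidableEq α] (S T : Finset α) (d c : α → ℕ) (t : ℕ)
    (ht : 3 ≤ t)
    (hS : ∀ v, 1 ≤ d v ↔ v ∈ S)
    (hkey : ∀ v ∈ T, t - 1 ≤ d v + c v)
    (hBk : ∀ k, k + 1 ≤ t - 2 → k + 1 ≤ (T.filter fun v => c v ≤ k).card)
    (hsum : ∑ v ∈ S, d v = 2 * Nat.choose t 2) :
    S.card + 1 ≤ Nat.choose (t + 1) 2 := by
  classical
  set cnt : α → ℕ := fun v => ((Finset.range (t - 2)).filter fun k => c v ≤ k).card with hcnt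
  have hcnteq : ∀ v, cnt v = t - 2 - c v := by
    intro v
    have h : (Finset.range (t - 2)).filter (fun k => c v ≤ k) = Finset.Ico (c v) (t - 2) := by
      ext k
      simp only [Finset.mem_filter, Finset.mem_range, Finset.mem_Ico]
      omega
    calc cnt v = (Finset.Ico (c v) (t - 2)).card := congrArg Finset.card h
      _ = t - 2 - c v := Nat.card_Ico _ _
  have hpt : ∀ v ∈ S ∩ T, 1 + cnt v ≤ d v := by
    intro v hv
    rw [Finset.mem_inter] at hv
    have h1 : 1 ≤ d v := (hS v).mpr hv.1
    have h2 := hkey v hv.2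
    have h3 := hcnteq v
    omega
  have hsplit : (S ∩ T).card + (S \ T).card + ∑ v ∈ S ∩ T, cnt v ≤ ∑ v ∈ S, d v := by
    have hsd : ∑ v ∈ S \ (S ∩ T), d v + ∑ v ∈ S ∩ T, d v = ∑ v ∈ S, d v :=
      Finset.sum_sdiff (Finset.inter_subset_left)
    rw [Finset.sdiff_inter_self_left] at hsd
    have h1 : (S ∩ T).card + ∑ v ∈ S ∩ T, cnt v ≤ ∑ v ∈ S ∩ T, d v := by
      calc (S ∩ T).card + ∑ v ∈ S ∩ T, cnt v = ∑ v ∈ S ∩ T, (1 + cnt v) := by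
            rw [Finset.sum_add_distrib, Finset.sum_const, smul_eq_mul, mul_one]
        _ ≤ ∑ v ∈ S ∩ T, d v := Finset.sum_le_sum hpt
    have h2 : (S \ T).card ≤ ∑ v ∈ S \ T, d v := by
      calc (S \ T).card = ∑ _v ∈ S \ T, 1 := by
            rw [Finset.sum_const, smul_eq_mul, mul_one]
        _ ≤ ∑ v ∈ S \ T, d v := by
            apply Finset.sum_le_sum
            intro v hv
            exact (hS v).mpr (Finset.mem_sdiff.mp hv).1
    omega
  have hswap : ∑ v ∈ S ∩ T, cnt v
      = ∑ k ∈ Finset.range (t - 2), ((S ∩ T).filter fun v => c v ≤ k).card := by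
    have : ∀ v, cnt v = ∑ k ∈ Finset.range (t - 2), if c v ≤ k then 1 else 0 := by
      intro v
      rw [hcnt]
      exact Finset.card_filter _ _
    rw [Finset.sum_congr rfl fun v _ => this v, Finset.sum_comm]
    apply Finset.sum_congr rfl
    intro k _
    exact (Finset.card_filter _ _).symm
  have hlow : ∀ k, k + 1 ≤ t - 2 → k + 1 ≤ ((S ∩ T).filter fun v => c v ≤ k).card := by
    intro k hk
    refine le_trans (hBk k hk) (Finset.card_le_card ?_)
    intro v hv
    rw [Finset.mem_filter] at hv ⊢
    have hdv : 1 ≤ d v := by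
      have := hkey v hv.1
      omega
    exact ⟨Finset.mem_inter.mpr ⟨(hS v).mp hdv, hv.1⟩, hv.2⟩
  have hsum3 : Nat.choose (t - 1) 2 ≤ ∑ k ∈ Finset.range (t - 2), ((S ∩ T).filter fun v => c v ≤ k).card := by
    have : ∑ k ∈ Finset.range (t - 2), (k + 1) = Nat.choose (t - 1) 2 := by
      rw [sum_range_succ_choose]
      congr 1
      omega
    rw [← this]
    apply Finset.sum_le_sum
    intro k hk
    rw [Finset.mem_range] at hk
    exact hlow k (by omega)
  have hcards : (S ∩ T).card + (S \ T).card = S.card := Finset.card_inter_add_card_sdiff S T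
  have hA : Nat.choose (t + 1) 2 = Nat.choose t 2 + t := choose_succ_two t
  have hB2 : Nat.choose t 2 = Nat.choose (t - 1) 2 + (t - 1) := by
    have h1 : t - 1 + 1 = t := by omega
    have := choose_succ_two (t - 1)
    rw [h1] at this
    omega
  omega

variable (hcopy : ∀ i : Fin es.length,
    ContainsCopyWithEdge (Gi F0 es ((i : ℕ) + 1)) (star t) (es.get i))

include hcopy

lemma step_center (i : Fin es.length) :
    ∃ c d : Fin n, es.get i = s(c, d) ∧ Rich t F0 es (i : ℕ) c := by
  obtain ⟨c, d, he, hc⟩ := center_of_copy (hcopy i)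
  refine ⟨c, d, he, ?_⟩
  have := ncard_nbhd_succ_le F0 es (i : ℕ) c
  unfold Rich
  omega

lemma neighbor_origin {v u : Fin n} (hu : u ∈ (Gi F0 es (tau t F0 es v)).neighborSet v) :
    F0.Adj v u ∨ ∃ j : ℕ, j < tau t F0 es v ∧ Rich t F0 es j u := by
  by_cases hF : F0.Adj v u
  · exact Or.inl hF
  right
  have hadj : (Gi F0 es (tau t F0 es v)).Adj v u := hu
  have hmem : s(v, u) ∈ (es.take (tau t F0 es v)) := by
    rcases hadj with h | h
    · exact absurd h hF
    · rw [SimpleGraph.fromEdgeSet_adj] at h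
      exact h.1
  rw [List.mem_iff_getElem] at hmem
  obtain ⟨j, hj, hje⟩ := hmem
  rw [List.getElem_take] at hje
  have hjlen : j < es.length := lt_of_lt_of_le hj (by simpa using (List.length_take_le _ es))
  have hjtau : j < tau t F0 es v := lt_of_lt_of_le hj (by simpa using List.length_take_le _ es)
  obtain ⟨c, d, hcd, hrich⟩ := step_center t F0 es hcopy ⟨j, hjlen⟩
  have : s(c, d) = s(v, u) := by rw [← hcd]; exact hje
  rw [Sym2.eq_iff] at this
  rcases this with ⟨h1, h2⟩ | ⟨h1, h2⟩
  · rw [h1] at hrich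
    have hle : tau t F0 es v ≤ j :=
      Nat.sInf_le (show j ∈ {i | Rich t F0 es i v} from hrich)
    omega
  · rw [h1] at hrich
    exact ⟨j, hjtau, hrich⟩

lemma tau_unique_new {i : ℕ} {u x : Fin n}
    (hu1 : Rich t F0 es (i + 1) u) (hu0 : ¬ Rich t F0 es i u)
    (hx1 : Rich t F0 es (i + 1) x) (hx0 : ¬ Rich t F0 es i x) : u = x := by
  by_contra hne
  have hz : ∀ w : Fin n, Rich t F0 es (i+1) w → ¬ Rich t F0 es i w →
      ∃ z, (Gi F0 es (i+1)).Adj w z ∧ ¬ (Gi F0 es i).Adj w z := by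
    intro w h1 h0
    by_contra hc
    push_neg at hc
    apply h0
    refine le_trans h1 (Set.ncard_le_ncard ?_ (Set.toFinite _))
    intro z hzz
    by_contra h'
    exact h' (hc z hzz)
  obtain ⟨zu, hzu1, hzu0⟩ := hz u hu1 hu0
  obtain ⟨zx, hzx1, hzx0⟩ := hz x hx1 hx0
  obtain ⟨hl, heu⟩ := new_adj F0 es hzu1 hzu0
  obtain ⟨_, hex⟩ := new_adj F0 es hzx1 hzx0
  obtain ⟨c, d, hcd, hrich⟩ := step_center t F0 es hcopy ⟨i, hl⟩
  have h1 : s(c, d) = s(u, zu) := by rw [← hcd]; exact heu.symm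
  have h2 : s(c, d) = s(x, zx) := by rw [← hcd]; exact hex.symm
  rw [Sym2.eq_iff] at h1 h2
  rcases h1 with ⟨rfl, rfl⟩ | ⟨h1a, h1b⟩
  · exact hu0 hrich
  · rcases h2 with ⟨rfl, rfl⟩ | ⟨h2a, h2b⟩
    · exact hx0 hrich
    · exact hne (h1b.symm.trans h2b)


end Stmt14Aux

/-- if `G` is connected, `wsat(G, K_{1,t}) = C(t,2)` and `G` has at least `μ`
vertices of degree at least `t-1` with `μ > C(t+1,2)`, then `G` contains a saturating structure
of length `μ` whose core has size at most `C(t+1,2)`. -/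
theorem stmt_14 (t n μ : ℕ) (ht : 3 ≤ t) (G : SimpleGraph (Fin n)) (hG : G.Connected)
    (hwsat : wsat G (star t) = Nat.choose t 2)
    (hμ : Nat.choose (t + 1) 2 < μ)
    (hdeg : μ ≤ {v : Fin n | t - 1 ≤ {u : Fin n | G.Adj v u}.ncard}.ncard) :
    ∃ y : ℕ, y ≤ Nat.choose (t + 1) 2 ∧
      ∃ (F : SimpleGraph (Fin n)) (v : Fin μ → Fin n),
        IsSaturatingStructure G t μ y F v := by

  classical
  -- extract a minimum weakly saturated subgraph F0 with an edge ordering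
  have hGsat : WeaklySaturated G G (star t) := by
    refine ⟨le_refl _, [], List.nodup_nil, ?_, ?_⟩
    · intro e; simp
    · intro i; exact absurd i.2 (by simp)
  have hne0 : {m | ∃ F, WeaklySaturated G F (star t) ∧ F.edgeSet.ncard = m}.Nonempty :=
    ⟨G.edgeSet.ncard, G, hGsat, rfl⟩
  have hmem0 : Nat.choose t 2 ∈ {m | ∃ F, WeaklySaturated G F (star t) ∧ F.edgeSet.ncard = m} := by
    rw [← hwsat]; exact Nat.sInf_mem hne0
  obtain ⟨F0, ⟨hle, es, _hnodup, hes, hcopy0⟩, hF0card⟩ := hmem0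
  have hcopy : ∀ i : Fin es.length,
      ContainsCopyWithEdge (Stmt14Aux.Gi F0 es ((i : ℕ) + 1)) (star t) (es.get i) :=
    fun i => hcopy0 i
  -- the final graph of the process is G
  have hGilen : Stmt14Aux.Gi F0 es es.length = G := by
    ext a b
    simp only [Stmt14Aux.Gi, SimpleGraph.sup_adj, SimpleGraph.fromEdgeSet_adj,
      Set.mem_setOf_eq, List.take_length]
    constructor
    · rintro (h | ⟨h, hne'⟩)
      · exact hle h
      · exact (SimpleGraph.mem_edgeSet G).mp ((hes _).mp h).1
    · intro h
      by_cases hF : F0.Adj a b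
      · exact Or.inl hF
      · refine Or.inr ⟨(hes _).mpr ⟨(SimpleGraph.mem_edgeSet G).mpr h, ?_⟩, h.ne⟩
        rw [SimpleGraph.mem_edgeSet]; exact hF
  have hchA : Nat.choose (t + 1) 2 = Nat.choose t 2 + t := Stmt14Aux.choose_succ_two t
  -- the set of vertices of G-degree at least t-1
  set TF : Finset (Fin n) := Finset.univ.filter (fun v => t - 1 ≤ (G.neighborSet v).ncard)
    with hTFdef
  have hTFcard : μ ≤ TF.card := by
    have h2 : (TF : Set (Fin n)) = {v : Fin n | t - 1 ≤ {u : Fin n | G.Adj v u}.ncard} := by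
      ext x
      rw [Finset.mem_coe, hTFdef, Finset.mem_filter]
      simp only [Finset.mem_univ, true_and, Set.mem_setOf_eq]
      rfl
    calc μ ≤ _ := hdeg
      _ = TF.card := by rw [← h2, Set.ncard_coe_finset]
  have hTFRich : ∀ v ∈ TF, Stmt14Aux.Rich t F0 es es.length v := by
    intro v hv
    rw [hTFdef, Finset.mem_filter] at hv
    show t - 1 ≤ ((Stmt14Aux.Gi F0 es es.length).neighborSet v).ncard
    rw [hGilen]
    exact hv.2
  have hRichTF : ∀ v : Fin n, Stmt14Aux.Rich t F0 es es.length v → v ∈ TF := by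
    intro v hv
    rw [hTFdef, Finset.mem_filter]
    refine ⟨Finset.mem_univ _, ?_⟩
    have h1 : t - 1 ≤ ((Stmt14Aux.Gi F0 es es.length).neighborSet v).ncard := hv
    rwa [hGilen] at h1
  have hτle : ∀ v ∈ TF, Stmt14Aux.tau t F0 es v ≤ es.length :=
    fun v hv => Stmt14Aux.tau_le t F0 es (hTFRich v hv)
  have hτmem : ∀ v ∈ TF, Stmt14Aux.Rich t F0 es (Stmt14Aux.tau t F0 es v) v :=
    fun v hv => Stmt14Aux.tau_mem t F0 es (hTFRich v hv)
  -- the support of F0 and the handshake bound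
  set S0F : Finset (Fin n) := Finset.univ.filter (fun v => 1 ≤ (F0.neighborSet v).ncard)
    with hS0def
  have hSmem : ∀ v : Fin n, 1 ≤ (F0.neighborSet v).ncard ↔ v ∈ S0F := by
    intro v
    rw [hS0def, Finset.mem_filter]
    simp only [Finset.mem_univ, true_and]
  haveI hdec : DecidableRel F0.Adj := Classical.decRel _
  have hdeg_eq : ∀ v : Fin n, (F0.neighborSet v).ncard = F0.degree v := by
    intro v
    rw [← Nat.card_coe_set_eq, Nat.card_eq_fintype_card,
      SimpleGraph.card_neighborSet_eq_degree]
  have hedge : F0.edgeFinset.card = Nat.choose t 2 := by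
    rw [SimpleGraph.edgeFinset_card, ← Nat.card_eq_fintype_card, Nat.card_coe_set_eq,
      hF0card]
  have hsumdeg : ∑ v ∈ S0F, (F0.neighborSet v).ncard = 2 * Nat.choose t 2 := by
    have h1 : ∑ v ∈ S0F, (F0.neighborSet v).ncard
        = ∑ v ∈ Finset.univ, (F0.neighborSet v).ncard := by
      apply Finset.sum_subset (Finset.subset_univ _)
      intro x _ hx
      have h2 : ¬ 1 ≤ (F0.neighborSet x).ncard := fun hc => hx ((hSmem x).mp hc)
      omega
    rw [h1]
    calc ∑ v ∈ Finset.univ, (F0.neighborSet v).ncard = ∑ v ∈ Finset.univ, F0.degree v :=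
          Finset.sum_congr rfl (fun v _ => hdeg_eq v)
      _ = 2 * F0.edgeFinset.card := F0.sum_degrees_eq_twice_card_edges
      _ = 2 * Nat.choose t 2 := by rw [hedge]
  -- the key degree estimate
  have hkey : ∀ v ∈ TF, t - 1 ≤ (F0.neighborSet v).ncard
      + (TF.filter fun u => Stmt14Aux.tau t F0 es u < Stmt14Aux.tau t F0 es v).card := by
    intro v hv
    have hr : t - 1 ≤ ((Stmt14Aux.Gi F0 es (Stmt14Aux.tau t F0 es v)).neighborSet v).ncard :=
      hτmem v hv
    have hsub : (Stmt14Aux.Gi F0 es (Stmt14Aux.tau t F0 es v)).neighborSet v ⊆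
        F0.neighborSet v
          ∪ ↑(TF.filter fun u => Stmt14Aux.tau t F0 es u < Stmt14Aux.tau t F0 es v) := by
      intro u hu
      rcases Stmt14Aux.neighbor_origin t F0 es hcopy hu with hF | ⟨j, hjτ, hrich⟩
      · exact Or.inl hF
      · right
        have hjlen : j ≤ es.length := le_trans (le_of_lt hjτ) (hτle v hv)
        have hT : u ∈ TF := hRichTF u (Stmt14Aux.rich_mono t F0 es hjlen hrich)
        have hτu : Stmt14Aux.tau t F0 es u < Stmt14Aux.tau t F0 es v :=
          lt_of_le_of_lt (Stmt14Aux.tau_le t F0 es hrich) hjτ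
        rw [Finset.mem_coe, Finset.mem_filter]
        exact ⟨hT, hτu⟩
    have h2 : ((Stmt14Aux.Gi F0 es (Stmt14Aux.tau t F0 es v)).neighborSet v).ncard ≤
        (F0.neighborSet v
          ∪ ↑(TF.filter fun u => Stmt14Aux.tau t F0 es u < Stmt14Aux.tau t F0 es v)).ncard :=
      Set.ncard_le_ncard hsub (Set.toFinite _)
    have h3 := Set.ncard_union_le (F0.neighborSet v)
      (↑(TF.filter fun u => Stmt14Aux.tau t F0 es u < Stmt14Aux.tau t F0 es v) : Set (Fin n))
    have h4 := Set.ncard_coe_finset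
      (TF.filter fun u => Stmt14Aux.tau t F0 es u < Stmt14Aux.tau t F0 es v)
    omega
  have htleμ : t ≤ μ := by omega
  have hBk : ∀ k, k + 1 ≤ t - 2 → k + 1 ≤ (TF.filter fun v =>
      (TF.filter fun u => Stmt14Aux.tau t F0 es u < Stmt14Aux.tau t F0 es v).card ≤ k).card := by
    intro k hk
    exact Stmt14Aux.exists_Bk TF (Stmt14Aux.tau t F0 es) k (by omega)
  have hS0card : S0F.card + 1 ≤ Nat.choose (t + 1) 2 :=
    Stmt14Aux.support_bound S0F TF (fun v => (F0.neighborSet v).ncard)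
      (fun v => (TF.filter fun u => Stmt14Aux.tau t F0 es u < Stmt14Aux.tau t F0 es v).card)
      t ht hSmem hkey hBk hsumdeg
  -- vertices that get rich during the process
  set T' : Finset (Fin n) := TF \ S0F with hT'def
  have hT'sub : ∀ u ∈ T', u ∈ TF := fun u hu => (Finset.mem_sdiff.mp hu).1
  have hT'deg0 : ∀ u ∈ T', (F0.neighborSet u).ncard = 0 := by
    intro u hu
    have h1 := (Finset.mem_sdiff.mp hu).2
    have h2 : ¬ 1 ≤ (F0.neighborSet u).ncard := fun hc => h1 ((hSmem u).mp hc)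
    omega
  have hτinj : ∀ u ∈ T', ∀ x ∈ T',
      Stmt14Aux.tau t F0 es u = Stmt14Aux.tau t F0 es x → u = x := by
    intro u hu x hx he
    have hru := hTFRich u (hT'sub u hu)
    have hrx := hTFRich x (hT'sub x hx)
    have hpu : 0 < Stmt14Aux.tau t F0 es u := Stmt14Aux.tau_pos t F0 es ht (hT'deg0 u hu) hru
    have hieq : Stmt14Aux.tau t F0 es u - 1 + 1 = Stmt14Aux.tau t F0 es u := by omega
    have h1lt : Stmt14Aux.tau t F0 es u - 1 < Stmt14Aux.tau t F0 es u := by omega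
    have h2lt : Stmt14Aux.tau t F0 es u - 1 < Stmt14Aux.tau t F0 es x := by omega
    refine Stmt14Aux.tau_unique_new t F0 es hcopy (i := Stmt14Aux.tau t F0 es u - 1)
      ?_ ?_ ?_ ?_
    · rw [hieq]; exact Stmt14Aux.tau_mem t F0 es hru
    · exact Stmt14Aux.not_rich_of_lt_tau t F0 es h1lt
    · rw [hieq, he]; exact Stmt14Aux.tau_mem t F0 es hrx
    · exact Stmt14Aux.not_rich_of_lt_tau t F0 es h2lt
  -- enumerate T' in increasing order of tau
  set K : Finset ℕ := T'.image (Stmt14Aux.tau t F0 es) with hKdef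
  have hKcard : K.card = T'.card :=
    Finset.card_image_of_injOn (fun u hu x hx h => hτinj u hu x hx h)
  obtain ⟨e1, -⟩ : ∃ _e1 : Fin T'.card ≃o {x // x ∈ K}, True :=
    ⟨K.orderIsoOfFin hKcard, trivial⟩
  have hwex : ∀ k : Fin T'.card, ∃ u ∈ T', Stmt14Aux.tau t F0 es u = ((e1 k : {x // x ∈ K}) : ℕ) := by
    intro k
    exact Finset.mem_image.mp (e1 k).2
  choose w hwT' hwτ using hwex
  have hwmono : ∀ k k' : Fin T'.card, k < k' →
      Stmt14Aux.tau t F0 es (w k) < Stmt14Aux.tau t F0 es (w k') := by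
    intro k k' hkk'
    rw [hwτ k, hwτ k']
    exact Subtype.coe_lt_coe.mpr (e1.strictMono hkk')
  have hwlt : ∀ k k' : Fin T'.card,
      Stmt14Aux.tau t F0 es (w k) < Stmt14Aux.tau t F0 es (w k') → k < k' := by
    intro k k' h
    by_contra hc
    push_neg at hc
    rcases eq_or_lt_of_le hc with heq | hlt
    · rw [heq] at h; exact lt_irrefl _ h
    · exact absurd h (by have := hwmono k' k hlt; omega)
  have hwinj : Function.Injective w := by
    intro k k' h
    by_contra hc
    rcases lt_or_gt_of_ne hc with hlt | hlt
    · have := hwmono _ _ hlt; rw [h] at this; omega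
    · have := hwmono _ _ hlt; rw [h] at this; omega
  have hwsurj : ∀ u ∈ T', ∃ k : Fin T'.card, w k = u := by
    intro u hu
    have hm : Stmt14Aux.tau t F0 es u ∈ K := by
      rw [hKdef]; exact Finset.mem_image_of_mem _ hu
    refine ⟨e1.symm ⟨_, hm⟩, ?_⟩
    apply hτinj _ (hwT' _) _ hu
    rw [hwτ, e1.apply_symm_apply]
  -- enumerate S0F
  set s0 : ℕ := S0F.card with hs0def
  obtain ⟨e0, -⟩ : ∃ _e0 : Fin s0 ≃o {x // x ∈ S0F}, True :=
    ⟨S0F.orderIsoOfFin hs0def.symm, trivial⟩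
  have hcard2 : μ ≤ s0 + T'.card := by
    have h1 : TF ⊆ S0F ∪ T' := by
      intro x hx
      rw [Finset.mem_union]
      by_cases h : x ∈ S0F
      · exact Or.inl h
      · exact Or.inr (Finset.mem_sdiff.mpr ⟨hx, h⟩)
    have h2 := Finset.card_le_card h1
    have h3 := Finset.card_union_le S0F T'
    omega
  -- a junk vertex
  obtain ⟨v0, hv0⟩ := Finset.card_pos.mp (show 0 < TF.card by omega)
  -- the vertex enumeration
  set E0 : ℕ → Fin n :=
    (fun m => if h : m < s0 then ((e0 ⟨m, h⟩ : {x // x ∈ S0F}) : Fin n) else v0) with hE0def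
  have hE0 : ∀ (m : ℕ) (h : m < s0), E0 m = ((e0 ⟨m, h⟩ : {x // x ∈ S0F}) : Fin n) := by
    intro m h
    simp only [hE0def]
    rw [dif_pos h]
  have hE0mem : ∀ (m : ℕ) (h : m < s0), E0 m ∈ S0F := by
    intro m h
    rw [hE0 m h]
    exact (e0 ⟨m, h⟩).2
  have hE0inj : ∀ (m m' : ℕ) (h : m < s0) (h' : m' < s0), E0 m = E0 m' → m = m' := by
    intro m m' h h' heq
    rw [hE0 m h, hE0 m' h'] at heq
    have h2 := e0.injective (Subtype.coe_injective heq)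
    exact congrArg Fin.val h2
  have hE0surj : ∀ u ∈ S0F, ∃ (m : ℕ) (h : m < s0), E0 m = u := by
    intro u hu
    refine ⟨(e0.symm ⟨u, hu⟩ : Fin s0), (e0.symm ⟨u, hu⟩).2, ?_⟩
    rw [hE0 _ (e0.symm ⟨u, hu⟩).2]
    have h1 : (⟨((e0.symm ⟨u, hu⟩ : Fin s0) : ℕ), (e0.symm ⟨u, hu⟩).2⟩ : Fin s0)
        = e0.symm ⟨u, hu⟩ := by
      apply Fin.ext; rfl
    rw [h1, e0.apply_symm_apply]
  set W : ℕ → Fin n := (fun m => if h : m < T'.card then w ⟨m, h⟩ else v0) with hWdef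
  have hW : ∀ (m : ℕ) (h : m < T'.card), W m = w ⟨m, h⟩ := by
    intro m h
    simp only [hWdef]
    rw [dif_pos h]
  set vv : Fin μ → Fin n :=
    (fun i => if (i : ℕ) < s0 then E0 (i : ℕ) else W ((i : ℕ) - s0)) with hvvdef
  have hvvS : ∀ (i : Fin μ), (i : ℕ) < s0 → vv i = E0 (i : ℕ) := by
    intro i h
    simp only [hvvdef]
    rw [if_pos h]
  have hvvT : ∀ (i : Fin μ), ¬ (i : ℕ) < s0 → vv i = W ((i : ℕ) - s0) := by
    intro i h
    simp only [hvvdef]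
    rw [if_neg h]
  have hidx : ∀ i : Fin μ, ¬ ((i : ℕ) < s0) → ((i : ℕ) - s0) < T'.card := by
    intro i h
    have := i.isLt
    omega
  have hvw : ∀ (i : Fin μ) (h : ¬ ((i : ℕ) < s0)), vv i = w ⟨(i : ℕ) - s0, hidx i h⟩ := by
    intro i h
    rw [hvvT i h, hW _ (hidx i h)]
  have hvvinj : Function.Injective vv := by
    intro a b hab
    by_cases ha : (a : ℕ) < s0 <;> by_cases hb : (b : ℕ) < s0
    · rw [hvvS a ha, hvvS b hb] at hab
      exact Fin.ext (hE0inj _ _ ha hb hab)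
    · exfalso
      rw [hvvS a ha, hvw b hb] at hab
      have h1 : E0 (a : ℕ) ∈ S0F := hE0mem _ ha
      rw [hab] at h1
      exact (Finset.mem_sdiff.mp (hwT' _)).2 h1
    · exfalso
      rw [hvw a ha, hvvS b hb] at hab
      have h1 : E0 (b : ℕ) ∈ S0F := hE0mem _ hb
      rw [← hab] at h1
      exact (Finset.mem_sdiff.mp (hwT' _)).2 h1
    · rw [hvw a ha, hvw b hb] at hab
      have h1 := hwinj hab
      have h2 : (a : ℕ) - s0 = (b : ℕ) - s0 := congrArg Fin.val h1
      apply Fin.ext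
      omega
  -- core size
  set y0 : ℕ := max s0 t with hy0def
  have hs0y : s0 ≤ y0 := le_max_left _ _
  have hty : t ≤ y0 := le_max_right _ _
  have hy0C : y0 ≤ Nat.choose (t + 1) 2 := by
    rw [hy0def]
    apply max_le <;> omega
  have hy0μ : y0 < μ := by
    rw [hy0def]
    apply max_lt <;> omega
  -- neighbours at enrichment time come earlier in the enumeration
  have hnb : ∀ (i : Fin μ), y0 ≤ (i : ℕ) →
      ∀ x ∈ (Stmt14Aux.Gi F0 es (Stmt14Aux.tau t F0 es (vv i))).neighborSet (vv i),
      ∃ j : Fin μ, (j : ℕ) < (i : ℕ) ∧ vv j = x := by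
    intro i hiy x hx
    have his0 : ¬ ((i : ℕ) < s0) := by omega
    have hiT' : vv i ∈ T' := by rw [hvw i his0]; exact hwT' _
    have hS0case : x ∈ S0F → ∃ j : Fin μ, (j : ℕ) < (i : ℕ) ∧ vv j = x := by
      intro hxS
      obtain ⟨m, hm, hE⟩ := hE0surj x hxS
      have hmμ : m < μ := by have := i.isLt; omega
      refine ⟨⟨m, hmμ⟩, ?_, ?_⟩
      · show m < (i : ℕ); omega
      · rw [hvvS ⟨m, hmμ⟩ (show m < s0 from hm)]; exact hE
    rcases Stmt14Aux.neighbor_origin t F0 es hcopy hx with hF | ⟨j', hj', hrich⟩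
    · apply hS0case
      have h1 : vv i ∈ F0.neighborSet x := hF.symm
      have h2 : 0 < (F0.neighborSet x).ncard := (Set.ncard_pos (Set.toFinite _)).mpr ⟨vv i, h1⟩
      exact (hSmem x).mp h2
    · have hτx : Stmt14Aux.tau t F0 es x < Stmt14Aux.tau t F0 es (vv i) :=
        lt_of_le_of_lt (Stmt14Aux.tau_le t F0 es hrich) hj'
      have hxTF : x ∈ TF := by
        apply hRichTF
        apply Stmt14Aux.rich_mono t F0 es (j := es.length) _ hrich
        have := hτle (vv i) (hT'sub _ hiT')
        omega
      by_cases hxS : x ∈ S0F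
      · exact hS0case hxS
      · have hxT' : x ∈ T' := Finset.mem_sdiff.mpr ⟨hxTF, hxS⟩
        obtain ⟨k, hk⟩ := hwsurj x hxT'
        have h5 : Stmt14Aux.tau t F0 es (w k)
            < Stmt14Aux.tau t F0 es (w ⟨(i : ℕ) - s0, hidx i his0⟩) := by
          rw [hk, ← hvw i his0]
          exact hτx
        have hki : (k : ℕ) < (i : ℕ) - s0 := hwlt _ _ h5
        have hjμ : s0 + (k : ℕ) < μ := by have := i.isLt; omega
        have hns : ¬ ((⟨s0 + (k : ℕ), hjμ⟩ : Fin μ) : ℕ) < s0 := by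
          show ¬ s0 + (k : ℕ) < s0; omega
        refine ⟨⟨s0 + (k : ℕ), hjμ⟩, ?_, ?_⟩
        · show s0 + (k : ℕ) < (i : ℕ); omega
        · rw [hvw _ hns]
          have h6 : (⟨((⟨s0 + (k : ℕ), hjμ⟩ : Fin μ) : ℕ) - s0,
              hidx _ hns⟩ : Fin T'.card) = k := by
            apply Fin.ext
            show s0 + (k : ℕ) - s0 = (k : ℕ)
            omega
          rw [h6, hk]
  -- the saturating structure
  set Fedges : Set (Sym2 (Fin n)) := {e | ∃ i : Fin μ, y0 ≤ (i : ℕ) ∧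
      ∃ u ∈ (Stmt14Aux.Gi F0 es (Stmt14Aux.tau t F0 es (vv i))).neighborSet (vv i),
        e = s(vv i, u)} with hFedef
  set FF : SimpleGraph (Fin n) := SimpleGraph.fromEdgeSet Fedges with hFFdef
  have hτlen' : ∀ i : Fin μ, y0 ≤ (i : ℕ) → Stmt14Aux.tau t F0 es (vv i) ≤ es.length := by
    intro i hiy
    have his0 : ¬ ((i : ℕ) < s0) := by omega
    have hiT' : vv i ∈ T' := by rw [hvw i his0]; exact hwT' _
    exact hτle _ (hT'sub _ hiT')
  have hFle : FF ≤ G := by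
    intro a b hab
    rw [hFFdef, SimpleGraph.fromEdgeSet_adj, hFedef, Set.mem_setOf_eq] at hab
    obtain ⟨⟨i, hiy, u, hu, he⟩, hne'⟩ := hab
    have hGadj : G.Adj (vv i) u := by
      have h1 : (Stmt14Aux.Gi F0 es (Stmt14Aux.tau t F0 es (vv i))).Adj (vv i) u := hu
      have h3 := Stmt14Aux.Gi_mono F0 es (hτlen' i hiy) h1
      rwa [hGilen] at h3
    rw [Sym2.eq_iff] at he
    rcases he with ⟨rfl, rfl⟩ | ⟨h1, h2⟩
    · exact hGadj
    · rw [h1, h2]; exact hGadj.symm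
  have hrange : ∀ a b : Fin n, FF.Adj a b → a ∈ Set.range vv ∧ b ∈ Set.range vv := by
    intro a b hab
    rw [hFFdef, SimpleGraph.fromEdgeSet_adj, hFedef, Set.mem_setOf_eq] at hab
    obtain ⟨⟨i, hiy, u, hu, he⟩, hne'⟩ := hab
    obtain ⟨j, _, hvj⟩ := hnb i hiy u hu
    rw [Sym2.eq_iff] at he
    rcases he with ⟨ha, hb⟩ | ⟨ha, hb⟩
    · exact ⟨⟨i, ha.symm⟩, ⟨j, hvj.trans hb.symm⟩⟩
    · exact ⟨⟨j, hvj.trans ha.symm⟩, ⟨i, hb.symm⟩⟩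
  have hcount : ∀ i : Fin μ, y0 ≤ (i : ℕ) →
      {j : Fin μ | (j : ℕ) < (i : ℕ) ∧ FF.Adj (vv i) (vv j)}.ncard = t - 1 := by
    intro i hiy
    have his0 : ¬ ((i : ℕ) < s0) := by omega
    have hiT' : vv i ∈ T' := by rw [hvw i his0]; exact hwT' _
    have hNcard : ((Stmt14Aux.Gi F0 es (Stmt14Aux.tau t F0 es (vv i))).neighborSet
        (vv i)).ncard = t - 1 :=
      Stmt14Aux.exact_count t F0 es ht (hT'deg0 _ hiT') (hTFRich _ (hT'sub _ hiT'))
    have himg : vv '' {j : Fin μ | (j : ℕ) < (i : ℕ) ∧ FF.Adj (vv i) (vv j)} =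
        (Stmt14Aux.Gi F0 es (Stmt14Aux.tau t F0 es (vv i))).neighborSet (vv i) := by
      apply Set.Subset.antisymm
      · rintro x ⟨j, ⟨hji, hadj⟩, rfl⟩
        rw [hFFdef, SimpleGraph.fromEdgeSet_adj, hFedef, Set.mem_setOf_eq] at hadj
        obtain ⟨⟨i', hi'y, u', hu', he'⟩, hne'⟩ := hadj
        rw [Sym2.eq_iff] at he'
        rcases he' with ⟨h1, h2⟩ | ⟨h1, h2⟩
        · have hii : i = i' := hvvinj h1
          rw [h2, hii]
          exact hu'
        · exfalso
          have hji' : j = i' := hvvinj h2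
          have hjy : y0 ≤ (j : ℕ) := by rw [hji']; exact hi'y
          have hjs0 : ¬ ((j : ℕ) < s0) := by omega
          have hjT' : vv j ∈ T' := by rw [hvw j hjs0]; exact hwT' _
          have hxy : vv i ∈ (Stmt14Aux.Gi F0 es
              (Stmt14Aux.tau t F0 es (vv j))).neighborSet (vv j) := by
            rw [← h1] at hu'
            rw [hji']
            exact hu'
          rcases Stmt14Aux.neighbor_origin t F0 es hcopy hxy with hF | ⟨j'', hj'', hrich⟩
          · have h7 : 0 < (F0.neighborSet (vv j)).ncard :=
              (Set.ncard_pos (Set.toFinite _)).mpr ⟨vv i, hF⟩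
            rw [hT'deg0 _ hjT'] at h7
            omega
          · have hτij : Stmt14Aux.tau t F0 es (vv i) < Stmt14Aux.tau t F0 es (vv j) :=
              lt_of_le_of_lt (Stmt14Aux.tau_le t F0 es hrich) hj''
            have h5 : Stmt14Aux.tau t F0 es (w ⟨(i : ℕ) - s0, hidx i his0⟩)
                < Stmt14Aux.tau t F0 es (w ⟨(j : ℕ) - s0, hidx j hjs0⟩) := by
              rw [← hvw i his0, ← hvw j hjs0]
              exact hτij
            have h6 : ((i : ℕ) - s0) < ((j : ℕ) - s0) := hwlt _ _ h5
            omega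
      · intro x hxN
        obtain ⟨j, hji, hvj⟩ := hnb i hiy x hxN
        refine ⟨j, ⟨hji, ?_⟩, hvj⟩
        rw [hFFdef, SimpleGraph.fromEdgeSet_adj]
        constructor
        · rw [hFedef, Set.mem_setOf_eq]
          exact ⟨i, hiy, x, hxN, by rw [hvj]⟩
        · rw [hvj]
          have h8 : (Stmt14Aux.Gi F0 es (Stmt14Aux.tau t F0 es (vv i))).Adj (vv i) x := hxN
          exact h8.ne
    have h7 := Set.ncard_image_of_injective
      {j : Fin μ | (j : ℕ) < (i : ℕ) ∧ FF.Adj (vv i) (vv j)} hvvinj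
    rw [himg] at h7
    omega
  exact ⟨y0, hy0C, FF, vv, hty, hy0μ, hFle, hvvinj, hrange, hcount⟩
end WsatRandom
end

section
/- Let t ≥ 3 be an integer and set p(n,t) = n^{−1/(t−1)} (ln n)^{−(t−2)/(t−1)}. There exists c > 0 such that for every sequence p_n ∈ (0,1) with p_n < c · p(n,t) for all sufficiently large n, with high probability G(n,p_n) contains no saturating structure (with parameter t) of length ⌊ln n⌋ whose core has size at most C(t+1,2). -/
open MeasureTheory Filter

namespace WsatRandom

/-- The threshold function `p(n,t) = n^{-1/(t-1)} (ln n)^{-(t-2)/(t-1)}`. -/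
noncomputable def pnt (n t : ℕ) : ℝ :=
  (n : ℝ) ^ (-(1 : ℝ) / ((t : ℝ) - 1)) * (Real.log n) ^ (-(((t : ℝ) - 2) / ((t : ℝ) - 1)))

section Auxiliary

lemma bern_univ (p : ℝ) (h0 : 0 ≤ p) (h1 : p ≤ 1) : bernoulliMeasure p Set.univ = 1 := by
  simp [bernoulliMeasure, ← ENNReal.ofReal_add h0 (by linarith : (0:ℝ) ≤ 1 - p)]

lemma bern_true (p : ℝ) : bernoulliMeasure p {true} = ENNReal.ofReal p := by
  simp [bernoulliMeasure, Measure.dirac_apply']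

instance (p : ℝ) : IsFiniteMeasure (bernoulliMeasure p) := by
  constructor
  simp only [bernoulliMeasure, Measure.add_apply, Measure.smul_apply, smul_eq_mul,
    Measure.dirac_apply, Set.mem_univ, Set.indicator_of_mem, Pi.one_apply, mul_one]
  exact ENNReal.add_lt_top.2 ⟨ENNReal.ofReal_lt_top, ENNReal.ofReal_lt_top⟩

lemma edge_prob (n : ℕ) (p : ℝ) (h0 : 0 ≤ p) (h1 : p ≤ 1) :
    IsProbabilityMeasure (edgeMeasure n p) := by
  haveI : IsProbabilityMeasure (bernoulliMeasure p) := ⟨bern_univ p h0 h1⟩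
  rw [edgeMeasure]; infer_instance

lemma meas_all (n : ℕ) (s : Set (Sym2 (Fin n) → Bool)) : MeasurableSet s := by
  have hsing : ∀ ω : Sym2 (Fin n) → Bool, MeasurableSet {ω} := by
    intro ω
    have : {ω} = Set.pi Set.univ (fun e => {ω e}) := by
      ext ρ; simp [Set.eq_singleton_iff_unique_mem, funext_iff, Set.mem_pi]
    rw [this]
    exact MeasurableSet.univ_pi (fun e => measurableSet_singleton _)
  have : s = ⋃ ω ∈ s, {ω} := by simp
  rw [this]
  exact MeasurableSet.biUnion (Set.to_countable s) (fun ω _ => hsing ω)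

lemma cyl_prob (n : ℕ) (p : ℝ) (h0 : 0 ≤ p) (h1 : p ≤ 1) (E : Finset (Sym2 (Fin n))) :
    edgeMeasure n p {ω | ∀ e ∈ E, ω e = true} = (ENNReal.ofReal p) ^ E.card := by
  have hset : {ω : Sym2 (Fin n) → Bool | ∀ e ∈ E, ω e = true}
      = Set.pi Set.univ (fun e => if e ∈ E then {true} else Set.univ) := by
    ext ω
    simp only [Set.mem_setOf_eq, Set.mem_pi, Set.mem_univ, forall_true_left]
    constructor
    · intro h e
      by_cases he : e ∈ E <;> simp [he, h]
    · intro h e he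
      have := h e; simp [he] at this; exact this
  rw [edgeMeasure, hset, Measure.pi_pi]
  have : ∀ e : Sym2 (Fin n), (bernoulliMeasure p) (if e ∈ E then ({true} : Set Bool) else Set.univ)
      = if e ∈ E then ENNReal.ofReal p else 1 := by
    intro e; by_cases he : e ∈ E
    · simp [he, bern_true]
    · simpa [he] using bern_univ p h0 h1
  simp only [this, Finset.prod_ite_mem, Finset.univ_inter, Finset.prod_const]

def idx (n x m : ℕ) : Finset (Finset (Sym2 (Fin n))) :=
  ((Finset.univ : Finset (Fin n)).powersetCard x).biUnion (fun S => S.sym2.powersetCard m)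

lemma idx_card (n x m : ℕ) : (idx n x m).card ≤ (n.choose x) * ((x*x).choose m) := by
  refine (Finset.card_biUnion_le).trans ?_
  have h1 : ∀ S ∈ (Finset.univ : Finset (Fin n)).powersetCard x,
      (S.sym2.powersetCard m).card ≤ (x*x).choose m := by
    intro S hS
    rw [Finset.card_powersetCard, Finset.card_sym2]
    rw [Finset.mem_powersetCard] at hS
    rw [hS.2]
    refine Nat.choose_le_choose m ?_
    rw [Nat.choose_two_right, Nat.add_sub_cancel]
    rcases Nat.eq_zero_or_pos x with h | h
    · simp [h]
    · refine Nat.div_le_of_le_mul ?_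
      have : x ≤ x * x := Nat.le_mul_of_pos_left x h
      nlinarith
  refine (Finset.sum_le_sum h1).trans ?_
  rw [Finset.sum_const, smul_eq_mul]
  gcongr
  · rw [Finset.card_powersetCard, Finset.card_univ, Fintype.card_fin]

lemma extract {n x y t : ℕ} (C₀ : ℕ) (hy : y ≤ C₀)
    {ω : Sym2 (Fin n) → Bool} {F : SimpleGraph (Fin n)} {v : Fin x → Fin n}
    (hs : IsSaturatingStructure (graphOf ω) t x y F v) :
    ∃ E ∈ idx n x ((t-1)*(x-C₀)), ∀ e ∈ E, ω e = true := by
  classical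
  obtain ⟨hty, hyx, hFG, hvinj, -, hdeg⟩ := hs
  set S : Finset (Fin n) := Finset.image v Finset.univ with hSdef
  have hScard : S.card = x := by
    rw [Finset.card_image_of_injective _ hvinj, Finset.card_univ, Fintype.card_fin]
  set D : Finset (Fin x × Fin x) := Finset.univ.filter
    (fun q : Fin x × Fin x => (q.2 : ℕ) < (q.1 : ℕ) ∧ y ≤ (q.1 : ℕ) ∧ F.Adj (v q.1) (v q.2))
    with hDdef
  have hDcard : (x - y) * (t - 1) ≤ D.card := by
    rw [Finset.card_eq_sum_card_fiberwise
      (f := Prod.fst) (t := Finset.univ) (fun q _ => Finset.mem_univ _)]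
    have hfib : ∀ i ∈ Finset.univ.filter (fun i : Fin x => y ≤ (i : ℕ)),
        t - 1 ≤ (D.filter (fun q => q.1 = i)).card := by
      intro i hi
      rw [Finset.mem_filter] at hi
      have hset : {j : Fin x | (j : ℕ) < (i : ℕ) ∧ F.Adj (v i) (v j)}
          = ↑(Finset.univ.filter (fun j : Fin x => (j : ℕ) < (i : ℕ) ∧ F.Adj (v i) (v j))) := by
        ext j; simp
      have hcard : (Finset.univ.filter
          (fun j : Fin x => (j : ℕ) < (i : ℕ) ∧ F.Adj (v i) (v j))).card = t - 1 := by
        have := hdeg i hi.2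
        rw [hset, Set.ncard_coe_finset] at this
        exact this
      rw [← hcard]
      refine Finset.card_le_card_of_injOn (fun j => (i, j)) ?_ ?_
      · intro j hj
        rw [Finset.mem_coe, Finset.mem_filter] at hj
        rw [Finset.mem_coe, Finset.mem_filter]
        exact ⟨Finset.mem_filter.2 ⟨Finset.mem_univ _, hj.2.1, hi.2, hj.2.2⟩, rfl⟩
      · intro a _ b _ h
        simpa using (Prod.ext_iff.1 h).2
    calc (x - y) * (t - 1)
        = ∑ _i ∈ Finset.univ.filter (fun i : Fin x => y ≤ (i : ℕ)), (t - 1) := by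
          rw [Finset.sum_const, smul_eq_mul]
          congr 1
          have : Finset.image (fun i : Fin x => (i : ℕ))
              (Finset.univ.filter (fun i : Fin x => y ≤ (i : ℕ))) = Finset.Ico y x := by
            ext k
            simp only [Finset.mem_image, Finset.mem_filter, Finset.mem_univ, true_and,
              Finset.mem_Ico]
            constructor
            · rintro ⟨i, hi, rfl⟩; exact ⟨hi, i.isLt⟩
            · rintro ⟨h1, h2⟩; exact ⟨⟨k, h2⟩, h1, rfl⟩
          have h2 := congrArg Finset.card this
          rw [Finset.card_image_of_injective _ Fin.val_injective, Nat.card_Ico] at h2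
          omega
      _ ≤ ∑ i ∈ Finset.univ.filter (fun i : Fin x => y ≤ (i : ℕ)),
            (D.filter (fun q => q.1 = i)).card := Finset.sum_le_sum hfib
      _ ≤ ∑ i ∈ Finset.univ, (D.filter (fun q => q.1 = i)).card :=
          Finset.sum_le_sum_of_subset (Finset.filter_subset _ _)
  have hinj : Set.InjOn (fun q : Fin x × Fin x => s(v q.1, v q.2)) ↑D := by
    intro q hq q' hq' h
    simp only [Finset.coe_filter, Set.mem_setOf_eq, hDdef, Finset.mem_filter] at hq hq'
    simp only [Sym2.eq_iff] at h
    rcases h with ⟨h1, h2⟩ | ⟨h1, h2⟩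
    · exact Prod.ext (hvinj h1) (hvinj h2)
    · have e1 := hvinj h1
      have e2 := hvinj h2
      have := hq.2.1
      have := hq'.2.1
      have : (q.1 : ℕ) = (q'.2 : ℕ) := by rw [e1]
      have : (q.2 : ℕ) = (q'.1 : ℕ) := by rw [e2]
      omega
  set E0 : Finset (Sym2 (Fin n)) := D.image (fun q : Fin x × Fin x => s(v q.1, v q.2)) with hE0
  have hE0card : E0.card = D.card := Finset.card_image_of_injOn hinj
  have hm0 : (t-1)*(x-C₀) ≤ E0.card := by
    rw [hE0card]
    calc (t-1)*(x-C₀) ≤ (t-1)*(x-y) := by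
          exact Nat.mul_le_mul_left _ (Nat.sub_le_sub_left hy x)
      _ = (x-y)*(t-1) := Nat.mul_comm _ _
      _ ≤ D.card := hDcard
  obtain ⟨E, hEsub, hEcard⟩ := Finset.exists_subset_card_eq hm0
  refine ⟨E, ?_, ?_⟩
  · rw [idx, Finset.mem_biUnion]
    refine ⟨S, Finset.mem_powersetCard.2 ⟨Finset.subset_univ _, hScard⟩,
      Finset.mem_powersetCard.2 ⟨hEsub.trans ?_, hEcard⟩⟩
    intro e he
    rw [hE0] at he
    obtain ⟨q, hq, rfl⟩ := Finset.mem_image.1 he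
    rw [Finset.mk_mem_sym2_iff]
    exact ⟨Finset.mem_image_of_mem v (Finset.mem_univ _),
      Finset.mem_image_of_mem v (Finset.mem_univ _)⟩
  · intro e he
    have he0 := hEsub he
    rw [hE0] at he0
    obtain ⟨q, hq, rfl⟩ := Finset.mem_image.1 he0
    rw [hDdef, Finset.mem_filter] at hq
    have hadj : (graphOf ω).Adj (v q.1) (v q.2) := hFG hq.2.2.2
    rw [graphOf, SimpleGraph.fromEdgeSet_adj] at hadj
    exact hadj.1

lemma pnt_pow {n t : ℕ} (ht : 3 ≤ t) (hn : 2 ≤ n) :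
    pnt n t ^ (t - 1) = ((n : ℝ) * (Real.log n) ^ (t - 2))⁻¹ := by
  have hN : (0:ℝ) < n := by positivity
  have hL : 0 < Real.log n := Real.log_pos (by exact_mod_cast hn)
  have ht1 : ((t:ℝ) - 1) ≠ 0 := by
    have : (3:ℝ) ≤ t := by exact_mod_cast ht
    linarith
  have hcast1 : ((t - 1 : ℕ) : ℝ) = (t:ℝ) - 1 := by
    have : 1 ≤ t := by omega
    push_cast [this]; ring
  have hcast2 : ((t - 2 : ℕ) : ℝ) = (t:ℝ) - 2 := by
    have : 2 ≤ t := by omega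
    push_cast [this]; ring
  rw [pnt, mul_pow]
  rw [← Real.rpow_natCast ((n:ℝ) ^ (-(1 : ℝ) / ((t : ℝ) - 1))) (t-1),
    ← Real.rpow_natCast ((Real.log n) ^ (-(((t : ℝ) - 2) / ((t : ℝ) - 1)))) (t-1),
    ← Real.rpow_mul hN.le, ← Real.rpow_mul hL.le, hcast1]
  rw [div_mul_cancel₀ _ ht1, neg_mul, div_mul_cancel₀ _ ht1]
  rw [Real.rpow_neg_one, Real.rpow_neg hL.le, ← hcast2, Real.rpow_natCast, mul_inv]

lemma calc_bound (t C₀ x n d : ℕ) (p c L : ℝ)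
    (ht : 3 ≤ t) (hC : 1 ≤ C₀) (hn2 : 2 ≤ n)
    (hx : x = C₀ + d) (hd : C₀ ≤ d)
    (hp0 : 0 ≤ p)
    (hpc : p ^ (t - 1) ≤ c ^ (t - 1) * ((n : ℝ) * L ^ (t - 2))⁻¹)
    (hc : c = Real.exp (-(C₀ : ℝ) - 5))
    (hL1 : 1 ≤ L) (hxL : (x : ℝ) ≤ L)
    (hNe : (n : ℝ) ≤ Real.exp ((x : ℝ) + 1)) :
    (n.choose x : ℝ) * (((x * x).choose ((t - 1) * (x - C₀))) : ℝ) * p ^ ((t - 1) * (x - C₀))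
      ≤ Real.exp (-(x : ℝ)) := by
  have hN0 : (0:ℝ) < n := by positivity
  set s : ℕ := t - 2 with hs
  have hts : t - 1 = s + 1 := by omega
  have hs1 : 1 ≤ s := by omega
  have hCsd : C₀ ≤ s * d := le_trans hd (Nat.le_mul_of_pos_left d (by omega))
  set k : ℕ := s * d - C₀ with hkdef
  have hsd : s * d = C₀ + k := by rw [hkdef, Nat.add_sub_cancel' hCsd]
  have hxC : x - C₀ = d := by omega
  set m0 : ℕ := (t - 1) * (x - C₀) with hm0
  have hm0e : m0 = x + k := by
    rw [hm0, hxC, hts, Nat.succ_mul, hsd, hx]; ring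
  have hX0 : (0:ℝ) < x := by
    have : (0:ℕ) < x := by omega
    exact_mod_cast this
  have hX1 : (1:ℝ) ≤ x := by exact_mod_cast (by omega : 1 ≤ x)
  have hL0 : (0:ℝ) < L := lt_of_lt_of_le one_pos hL1
  have hM0 : (0:ℝ) < m0 := by
    have : (0:ℕ) < m0 := by rw [hm0e]; omega
    exact_mod_cast this
  have hxm0 : x ≤ m0 := by omega
  set e1 : ℝ := Real.exp 1 with he1
  have he10 : 0 < e1 := Real.exp_pos 1
  have hc0 : 0 < c := by rw [hc]; exact Real.exp_pos _
  have hfac : ∀ j : ℕ, (0:ℝ) < j.factorial := fun j => by exact_mod_cast j.factorial_pos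
  have h1 : (n.choose x : ℝ) ≤ (n:ℝ) ^ x * Real.exp x / (x:ℝ) ^ x := by
    refine (Nat.choose_le_pow_div x n).trans ?_
    rw [div_le_div_iff₀ (hfac x) (by positivity)]
    have hXx : (x:ℝ) ^ x ≤ Real.exp x * (x.factorial : ℝ) := by
      have := Real.pow_div_factorial_le_exp (x := (x:ℝ)) hX0.le x
      rw [div_le_iff₀ (hfac x)] at this
      exact this
    calc ((n:ℝ) ^ x) * (x:ℝ) ^ x ≤ (n:ℝ) ^ x * (Real.exp x * (x.factorial : ℝ)) := by
          gcongr
      _ = (n:ℝ) ^ x * Real.exp x * (x.factorial : ℝ) := by ring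
  have h2 : (((x * x).choose m0) : ℝ) ≤ (e1 * (x:ℝ)) ^ m0 := by
    refine (Nat.choose_le_pow_div m0 (x*x)).trans ?_
    have hMm : ((m0:ℝ)) ^ m0 ≤ Real.exp m0 * (m0.factorial : ℝ) := by
      have := Real.pow_div_factorial_le_exp (x := (m0:ℝ)) hM0.le m0
      rw [div_le_iff₀ (hfac m0)] at this
      exact this
    have hexp : Real.exp (m0:ℝ) = e1 ^ m0 := by
      rw [he1, ← Real.exp_nat_mul, mul_one]
    have step : ((x*x : ℕ):ℝ) ^ m0 / (m0.factorial : ℝ) ≤ ((x:ℝ) * (x:ℝ) * e1 / m0) ^ m0 := by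
      rw [div_pow, div_le_div_iff₀ (hfac m0) (by positivity)]
      push_cast
      calc ((x:ℝ) * x) ^ m0 * (m0:ℝ) ^ m0 ≤ ((x:ℝ) * x) ^ m0 * (Real.exp m0 * m0.factorial) := by
            gcongr
        _ = ((x:ℝ) * x * e1) ^ m0 * m0.factorial := by rw [hexp]; ring
    refine step.trans ?_
    refine pow_le_pow_left₀ (by positivity) ?_ m0
    rw [div_le_iff₀ hM0]
    have hxm : (x:ℝ) ≤ (m0:ℝ) := by exact_mod_cast hxm0
    calc (x:ℝ) * x * e1 ≤ (m0:ℝ) * x * e1 := by gcongr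
      _ = e1 * (x:ℝ) * m0 := by ring
  have h3 : p ^ m0 ≤ (c ^ (t-1)) ^ d * (((n:ℝ) * L ^ s)⁻¹) ^ d := by
    rw [hm0, hxC, pow_mul, ← mul_pow]
    exact pow_le_pow_left₀ (by positivity) hpc d
  calc (n.choose x : ℝ) * (((x * x).choose m0) : ℝ) * p ^ m0
      ≤ ((n:ℝ) ^ x * Real.exp x / (x:ℝ) ^ x) * ((e1 * (x:ℝ)) ^ m0)
          * ((c ^ (t-1)) ^ d * (((n:ℝ) * L ^ s)⁻¹) ^ d) := by
        gcongr <;> positivity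
    _ = (n:ℝ) ^ C₀ * Real.exp x * (e1 * c) ^ m0 * ((x:ℝ) ^ k * (L ^ (C₀ + k))⁻¹) := by
        have e1' : (c ^ (t-1)) ^ d = c ^ m0 := by rw [← pow_mul, hm0, hxC]
        have e2' : (((n:ℝ) * L ^ s)⁻¹) ^ d = ((n:ℝ) ^ d * L ^ (C₀ + k))⁻¹ := by
          rw [inv_pow, mul_pow, ← pow_mul, hsd]
        have e3' : (n:ℝ) ^ x = (n:ℝ) ^ C₀ * (n:ℝ) ^ d := by rw [hx, pow_add]
        have e4' : ((x:ℝ)) ^ m0 = (x:ℝ) ^ x * (x:ℝ) ^ k := by rw [hm0e, pow_add]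
        rw [e1', e2', mul_pow e1 c m0, mul_pow e1 (x:ℝ) m0, e3', e4']
        have hXx0 : ((x:ℝ)) ^ x ≠ 0 := by positivity
        have hLk0 : (L:ℝ) ^ (C₀ + k) ≠ 0 := by positivity
        have hNd0 : ((n:ℝ)) ^ d ≠ 0 := by positivity
        field_simp
    _ ≤ Real.exp (((x:ℝ) + 1) * C₀) * Real.exp x * Real.exp (-((C₀:ℝ) + 4) * x)
          * ((L:ℝ) ^ k * (L ^ (C₀ + k))⁻¹) := by
        have hA : (n:ℝ) ^ C₀ ≤ Real.exp (((x:ℝ) + 1) * C₀) := by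
          calc (n:ℝ) ^ C₀ ≤ (Real.exp ((x:ℝ) + 1)) ^ C₀ := pow_le_pow_left₀ hN0.le hNe C₀
            _ = Real.exp (((x:ℝ) + 1) * C₀) := by
              rw [mul_comm, Real.exp_nat_mul]
        have hq : e1 * c = Real.exp (-(C₀:ℝ) - 4) := by
          rw [he1, hc, ← Real.exp_add]; ring_nf
        have hq1 : e1 * c ≤ 1 := by
          rw [hq, ← Real.exp_zero]
          refine Real.exp_le_exp.2 ?_
          have : (0:ℝ) ≤ C₀ := by positivity
          linarith
        have hB : (e1 * c) ^ m0 ≤ Real.exp (-((C₀:ℝ) + 4) * x) := by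
          calc (e1 * c) ^ m0 ≤ (e1 * c) ^ x := by
                exact pow_le_pow_of_le_one (by positivity) hq1 hxm0
            _ = Real.exp ((-(C₀:ℝ) - 4) * x) := by
                rw [hq, mul_comm, Real.exp_nat_mul]
            _ = Real.exp (-((C₀:ℝ) + 4) * x) := by ring_nf
        have hC' : ((x:ℝ)) ^ k ≤ (L:ℝ) ^ k := pow_le_pow_left₀ hX0.le hxL k
        calc (n:ℝ) ^ C₀ * Real.exp x * (e1 * c) ^ m0 * ((x:ℝ) ^ k * (L ^ (C₀ + k))⁻¹)
            ≤ Real.exp (((x:ℝ) + 1) * C₀) * Real.exp x * Real.exp (-((C₀:ℝ) + 4) * x)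
              * ((x:ℝ) ^ k * (L ^ (C₀ + k))⁻¹) := by
              gcongr
          _ ≤ _ := by gcongr
    _ ≤ Real.exp (((x:ℝ) + 1) * C₀) * Real.exp x * Real.exp (-((C₀:ℝ) + 4) * x) * 1 := by
        have : (L:ℝ) ^ k * (L ^ (C₀ + k))⁻¹ ≤ 1 := by
          rw [← div_eq_mul_inv, div_le_one (by positivity)]
          exact pow_le_pow_right₀ hL1 (by omega)
        gcongr
    _ ≤ Real.exp (-(x:ℝ)) := by
        rw [mul_one, ← Real.exp_add, ← Real.exp_add, Real.exp_le_exp]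
        have hCx : (C₀:ℝ) ≤ (x:ℝ) := by exact_mod_cast (by omega : C₀ ≤ x)
        nlinarith

end Auxiliary

/-- below the threshold, whp `G(n,p_n)` contains no saturating structure of
length `⌊ln n⌋` whose core has size at most `C(t+1,2)`. -/
theorem stmt_15 (t : ℕ) (ht : 3 ≤ t) :
    ∃ c : ℝ, 0 < c ∧ ∀ p : ℕ → ℝ,
      (∀ n : ℕ, p n ∈ Set.Ioo (0 : ℝ) 1) →
      (∀ᶠ n : ℕ in atTop, p n < c * pnt n t) →
      Tendsto (fun n : ℕ => edgeMeasure n (p n)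
          {ω | ¬ ∃ (y : ℕ) (F : SimpleGraph (Fin n))
              (v : Fin ⌊Real.log n⌋₊ → Fin n),
            y ≤ Nat.choose (t + 1) 2 ∧
            IsSaturatingStructure (graphOf ω) t ⌊Real.log n⌋₊ y F v})
        atTop (nhds (1 : ENNReal)) := by
  classical
  set C₀ : ℕ := Nat.choose (t + 1) 2 with hC₀
  have hC1 : 1 ≤ C₀ := Nat.choose_pos (by omega)
  refine ⟨Real.exp (-(C₀ : ℝ) - 5), Real.exp_pos _, ?_⟩
  intro p hp hev
  set c : ℝ := Real.exp (-(C₀ : ℝ) - 5) with hc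
  have hlog : Tendsto (fun n : ℕ => Real.log n) atTop atTop :=
    Real.tendsto_log_atTop.comp tendsto_natCast_atTop_atTop
  have hev2 : ∀ᶠ n : ℕ in atTop, (2 * C₀ + 1 : ℝ) ≤ Real.log n :=
    hlog.eventually_ge_atTop _
  have hev3 : ∀ᶠ n : ℕ in atTop, 2 ≤ n := eventually_ge_atTop 2
  -- the per-n bound on the probability of the bad event
  have key : ∀ᶠ n : ℕ in atTop,
      edgeMeasure n (p n) {ω | ∃ (y : ℕ) (F : SimpleGraph (Fin n))
          (v : Fin ⌊Real.log n⌋₊ → Fin n),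
        y ≤ C₀ ∧ IsSaturatingStructure (graphOf ω) t ⌊Real.log n⌋₊ y F v}
        ≤ ENNReal.ofReal (Real.exp (-(⌊Real.log (n:ℝ)⌋₊ : ℝ))) := by
    filter_upwards [hev, hev2, hev3] with n hplt hL2C hn2
    have hp0 : 0 ≤ p n := (hp n).1.le
    have hp1 : p n ≤ 1 := (hp n).2.le
    set x : ℕ := ⌊Real.log (n:ℝ)⌋₊ with hxdef
    set m : ℕ := (t - 1) * (x - C₀) with hmdef
    have hC0R : (0:ℝ) ≤ (C₀:ℝ) := by positivity
    have hL1 : (1:ℝ) ≤ Real.log n := by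
      have : (1:ℝ) ≤ 2 * C₀ + 1 := by linarith
      linarith
    have hL0 : (0:ℝ) ≤ Real.log n := by linarith
    have hxL : (x:ℝ) ≤ Real.log n := Nat.floor_le hL0
    have h2Cx : 2 * C₀ ≤ x := Nat.le_floor (by push_cast; linarith)
    have hsub : {ω : Sym2 (Fin n) → Bool | ∃ (y : ℕ) (F : SimpleGraph (Fin n))
          (v : Fin ⌊Real.log n⌋₊ → Fin n),
        y ≤ C₀ ∧ IsSaturatingStructure (graphOf ω) t ⌊Real.log n⌋₊ y F v}
        ⊆ ⋃ E ∈ idx n x m, {ω | ∀ e ∈ E, ω e = true} := by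
      rintro ω ⟨y, F, v, hy, hs⟩
      obtain ⟨E, hE, htrue⟩ := extract C₀ hy hs
      exact Set.mem_biUnion hE htrue
    have hNpos : (0:ℝ) < n := by
      have : (0:ℕ) < n := by omega
      exact_mod_cast this
    have hNe : (n:ℝ) ≤ Real.exp ((x:ℝ) + 1) := by
      rw [← Real.exp_log hNpos]
      exact Real.exp_le_exp.2 (Nat.lt_floor_add_one _).le
    have hreal : (n.choose x : ℝ) * (((x * x).choose m) : ℝ) * (p n) ^ m
        ≤ Real.exp (-(x:ℝ)) := by
      rw [hmdef]
      refine calc_bound t C₀ x n (x - C₀) (p n) c (Real.log n) ht hC1 hn2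
        (by omega) (by omega) hp0 ?_ hc hL1 hxL hNe
      calc (p n) ^ (t - 1) ≤ (c * pnt n t) ^ (t - 1) :=
            pow_le_pow_left₀ hp0 hplt.le _
        _ = c ^ (t - 1) * (pnt n t) ^ (t - 1) := mul_pow _ _ _
        _ = c ^ (t - 1) * ((n:ℝ) * (Real.log n) ^ (t - 2))⁻¹ := by
            rw [pnt_pow ht hn2]
    calc edgeMeasure n (p n) {ω | ∃ (y : ℕ) (F : SimpleGraph (Fin n))
          (v : Fin ⌊Real.log n⌋₊ → Fin n),
        y ≤ C₀ ∧ IsSaturatingStructure (graphOf ω) t ⌊Real.log n⌋₊ y F v}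
        ≤ edgeMeasure n (p n) (⋃ E ∈ idx n x m, {ω | ∀ e ∈ E, ω e = true}) :=
          measure_mono hsub
      _ ≤ ∑ E ∈ idx n x m, edgeMeasure n (p n) {ω | ∀ e ∈ E, ω e = true} :=
          measure_biUnion_finset_le _ _
      _ = ∑ _E ∈ idx n x m, (ENNReal.ofReal (p n)) ^ m := by
          refine Finset.sum_congr rfl ?_
          intro E hE
          rw [cyl_prob n (p n) hp0 hp1]
          congr 1
          rw [idx, Finset.mem_biUnion] at hE
          obtain ⟨S, hS, hES⟩ := hE
          exact (Finset.mem_powersetCard.1 hES).2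
      _ = ((idx n x m).card : ENNReal) * (ENNReal.ofReal (p n)) ^ m := by
          rw [Finset.sum_const, nsmul_eq_mul]
      _ ≤ ENNReal.ofReal ((n.choose x : ℝ) * (((x * x).choose m) : ℝ) * (p n) ^ m) := by
          rw [ENNReal.ofReal_mul (by positivity), ENNReal.ofReal_mul (by positivity)]
          rw [← ENNReal.ofReal_pow hp0]
          refine mul_le_mul' ?_ le_rfl
          calc ((idx n x m).card : ENNReal) ≤ ((n.choose x * ((x * x).choose m) : ℕ) : ENNReal) := by
                exact_mod_cast idx_card n x m
            _ = ENNReal.ofReal (n.choose x : ℝ) * ENNReal.ofReal (((x * x).choose m) : ℝ) := by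
                rw [← ENNReal.ofReal_mul (by positivity)]
                rw [← ENNReal.ofReal_natCast (n.choose x * ((x * x).choose m))]
                push_cast
                ring_nf
      _ ≤ ENNReal.ofReal (Real.exp (-(x:ℝ))) := ENNReal.ofReal_le_ofReal hreal
  -- the bad probability tends to 0
  have hxTop : Tendsto (fun n : ℕ => (⌊Real.log (n:ℝ)⌋₊ : ℝ)) atTop atTop :=
    tendsto_natCast_atTop_atTop.comp (tendsto_nat_floor_atTop.comp hlog)
  have hupper : Tendsto (fun n : ℕ => ENNReal.ofReal (Real.exp (-(⌊Real.log (n:ℝ)⌋₊ : ℝ))))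
      atTop (nhds 0) := by
    have h0 : (0 : ENNReal) = ENNReal.ofReal 0 := by simp
    rw [h0]
    exact ENNReal.tendsto_ofReal
      (Real.tendsto_exp_atBot.comp (tendsto_neg_atTop_atBot.comp hxTop))
  have hbad0 : Tendsto (fun n : ℕ => edgeMeasure n (p n)
      {ω | ∃ (y : ℕ) (F : SimpleGraph (Fin n)) (v : Fin ⌊Real.log n⌋₊ → Fin n),
        y ≤ C₀ ∧ IsSaturatingStructure (graphOf ω) t ⌊Real.log n⌋₊ y F v})
      atTop (nhds 0) := by
    refine tendsto_of_tendsto_of_tendsto_of_le_of_le' tendsto_const_nhds hupper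
      (Eventually.of_forall fun n => zero_le) key
  have hcompl : ∀ n : ℕ, edgeMeasure n (p n)
      {ω | ¬ ∃ (y : ℕ) (F : SimpleGraph (Fin n)) (v : Fin ⌊Real.log n⌋₊ → Fin n),
        y ≤ C₀ ∧ IsSaturatingStructure (graphOf ω) t ⌊Real.log n⌋₊ y F v}
      = 1 - edgeMeasure n (p n)
      {ω | ∃ (y : ℕ) (F : SimpleGraph (Fin n)) (v : Fin ⌊Real.log n⌋₊ → Fin n),
        y ≤ C₀ ∧ IsSaturatingStructure (graphOf ω) t ⌊Real.log n⌋₊ y F v} := by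
    intro n
    haveI := edge_prob n (p n) (hp n).1.le (hp n).2.le
    have hset : {ω : Sym2 (Fin n) → Bool |
        ¬ ∃ (y : ℕ) (F : SimpleGraph (Fin n)) (v : Fin ⌊Real.log n⌋₊ → Fin n),
        y ≤ C₀ ∧ IsSaturatingStructure (graphOf ω) t ⌊Real.log n⌋₊ y F v}
        = {ω : Sym2 (Fin n) → Bool |
        ∃ (y : ℕ) (F : SimpleGraph (Fin n)) (v : Fin ⌊Real.log n⌋₊ → Fin n),
        y ≤ C₀ ∧ IsSaturatingStructure (graphOf ω) t ⌊Real.log n⌋₊ y F v}ᶜ := rfl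
    rw [hset, prob_compl_eq_one_sub (meas_all _ _)]
  have hfinal := ENNReal.Tendsto.sub
    (tendsto_const_nhds : Tendsto (fun _ : ℕ => (1 : ENNReal)) atTop (nhds 1))
    hbad0 (Or.inl ENNReal.one_ne_top)
  rw [tsub_zero] at hfinal
  exact hfinal.congr (fun n => (hcompl n).symm)
end WsatRandom
end

section
/- Let G be a finite simple graph. Then wsat(G, K_{1,2}) = 1 if and only if exactly one connected component of G contains an edge. -/
open MeasureTheory Filter

namespace WsatRandom

lemma sym2_exists_eq {α : Type*} (e : Sym2 α) : ∃ a b, e = s(a,b) := by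
  induction e using Sym2.ind with | _ a b => exact ⟨a, b, rfl⟩

lemma copy_of_two_edges {V : Type*} {K : SimpleGraph V} {c x y : V} (hx : K.Adj c x)
    (hy : K.Adj c y) (hxy : x ≠ y) : ContainsCopyWithEdge K (star 2) s(c, x) := by
  refine ⟨Sum.elim (fun _ => c) (fun j => if j = 0 then x else y), ?_, ?_,
    Sum.inl 0, Sum.inr 0, ?_, ?_⟩
  · rintro (p | p) (q | q) h <;> simp only [Sum.elim_inl, Sum.elim_inr] at h
    · exact congrArg Sum.inl (Subsingleton.elim p q)
    · exfalso; split_ifs at h; exacts [hx.ne h, hy.ne h]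
    · exfalso; split_ifs at h; exacts [hx.ne h.symm, hy.ne h.symm]
    · congr 1
      by_contra hpq
      fin_cases p <;> fin_cases q <;> simp_all
  · rintro (a | a) (b | b) hab <;> simp only [star, completeBipartiteGraph_adj] at hab <;>
      simp only [Sum.elim_inl, Sum.elim_inr] at * <;> try simp_all
    · split_ifs; exacts [hx, hy]
    · split_ifs; exacts [hx.symm, hy.symm]
  · simp [star]
  · simp

lemma copy_extract {V : Type*} {K : SimpleGraph V} {e : Sym2 V}
    (h : ContainsCopyWithEdge K (star 2) e) :
    ∃ c x y, x ≠ y ∧ K.Adj c x ∧ K.Adj c y ∧ e = s(c, x) := by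
  obtain ⟨f, hinj, hmap, a, b, hab, he⟩ := h
  have hadj : ∀ t : Fin 2, K.Adj (f (Sum.inl 0)) (f (Sum.inr t)) := by
    intro t; exact hmap _ _ (by simp [star])
  have hne : ∀ s t : Fin 2, s ≠ t → f (Sum.inr s) ≠ f (Sum.inr t) := by
    intro s t hst hf; exact hst (Sum.inr.inj (hinj hf))
  rcases a with a | a <;> rcases b with b | b <;>
    simp only [star, completeBipartiteGraph_adj] at hab <;> try simp_all
  · -- a : Fin 1, b : Fin 2
    have ha : (Sum.inl a : Fin 1 ⊕ Fin 2) = Sum.inl 0 := by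
      congr 1; exact Subsingleton.elim _ _
    have hadj' : ∀ t : Fin 2, K.Adj (f (Sum.inl 0)) (f (Sum.inr t)) := by
      intro t; fin_cases t; exacts [hadj.1, hadj.2]
    have hne' : ∀ t : Fin 2, f (Sum.inr t) ≠ f (Sum.inr (t + 1)) := by
      intro t; fin_cases t; exacts [hne.1, hne.2]
    refine ⟨f (Sum.inl 0), f (Sum.inr b), f (Sum.inr (b + 1)), hne' b, hadj' _,
      hadj' _, ?_⟩
    exact Or.inl ⟨congrArg f ha, rfl⟩
  · -- a : Fin 2, b : Fin 1
    have hb : (Sum.inl b : Fin 1 ⊕ Fin 2) = Sum.inl 0 := by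
      congr 1; exact Subsingleton.elim _ _
    have hadj' : ∀ t : Fin 2, K.Adj (f (Sum.inl 0)) (f (Sum.inr t)) := by
      intro t; fin_cases t; exacts [hadj.1, hadj.2]
    have hne' : ∀ t : Fin 2, f (Sum.inr t) ≠ f (Sum.inr (t + 1)) := by
      intro t; fin_cases t; exacts [hne.1, hne.2]
    refine ⟨f (Sum.inl 0), f (Sum.inr a), f (Sum.inr (a + 1)), hne' a, hadj' _,
      hadj' _, ?_⟩
    exact Or.inr ⟨rfl, congrArg f hb⟩

/-- The key used to sort edges: distance of the edge from a root vertex. -/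
noncomputable def ekey {V : Type*} (G : SimpleGraph V) (u₀ : V) : Sym2 V → ℕ :=
  Sym2.lift ⟨fun a b => min (G.dist u₀ a) (G.dist u₀ b), fun a b => min_comm _ _⟩

lemma ekey_mk {V : Type*} (G : SimpleGraph V) (u₀ a b : V) :
    ekey G u₀ s(a, b) = min (G.dist u₀ a) (G.dist u₀ b) := rfl

lemma not_ws_zero {V : Type*} {G : SimpleGraph V} {u v : V} (hG : G.Adj u v)
    (hws : WeaklySaturated G ⊥ (star 2)) : False := by
  obtain ⟨_, es, hnd, hmem, hcopy⟩ := hws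
  have h0 : s(u, v) ∈ es := (hmem _).mpr ⟨G.mem_edgeSet.mpr hG, by simp⟩
  have hlen : 0 < es.length := List.length_pos_iff.mpr (List.ne_nil_of_mem h0)
  obtain ⟨c, x, y, hxy, hcx, hcy, _⟩ := copy_extract (hcopy ⟨0, hlen⟩)
  have hone : ∀ {p q : V},
      (⊥ ⊔ SimpleGraph.fromEdgeSet {e | e ∈ es.take (0 + 1)}).Adj p q → s(p, q) = es[0] := by
    intro p q h
    rcases (SimpleGraph.sup_adj _ _ _ _).mp h with h | h
    · exact absurd h (by simp)
    · have := ((SimpleGraph.fromEdgeSet_adj _).mp h).1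
      simp only [Set.mem_setOf_eq, List.take_succ, List.take_zero, List.nil_append,
        List.getElem?_eq_getElem hlen, Option.toList_some, List.mem_singleton] at this
      exact this
  have h1 := hone hcx
  have h2 := hone hcy
  rw [← h2] at h1
  rcases Sym2.eq_iff.mp h1 with ⟨_, h⟩ | ⟨h, h'⟩
  · exact hxy h
  · exact hxy (h'.trans h)

lemma backward {V : Type*} {G : SimpleGraph V} [Fintype V] {u₀ v₀ : V} (hadj : G.Adj u₀ v₀)
    (hreach : ∀ a b : V, G.Adj a b → G.Reachable u₀ a) :
    WeaklySaturated G (SimpleGraph.fromEdgeSet {s(u₀, v₀)}) (star 2) := by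
  classical
  set F := SimpleGraph.fromEdgeSet {s(u₀, v₀)} with hF
  have hFG : F ≤ G := by
    intro a b h
    rcases (SimpleGraph.fromEdgeSet_adj _).mp h with ⟨h1, h2⟩
    rcases Sym2.eq_iff.mp (Set.mem_singleton_iff.mp h1) with ⟨rfl, rfl⟩ | ⟨rfl, rfl⟩
    · exact hadj
    · exact hadj.symm
  have hfin : (G.edgeSet \ F.edgeSet).Finite := Set.toFinite _
  set es : List (Sym2 V) :=
    (hfin.toFinset.toList).mergeSort (fun e e' => decide (ekey G u₀ e ≤ ekey G u₀ e')) with hes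
  have hperm := List.mergeSort_perm hfin.toFinset.toList
    (fun e e' => decide (ekey G u₀ e ≤ ekey G u₀ e'))
  have hnd : es.Nodup := hperm.nodup_iff.mpr hfin.toFinset.nodup_toList
  have hmem : ∀ e, e ∈ es ↔ e ∈ G.edgeSet \ F.edgeSet := by
    intro e
    rw [hes, hperm.mem_iff, Finset.mem_toList, Set.Finite.mem_toFinset]
  have hsorted : ∀ (i j : ℕ) (hi : i < es.length) (hj : j < es.length), i < j →
      ekey G u₀ es[i] ≤ ekey G u₀ es[j] := by
    have hp := List.pairwise_mergeSort (le := fun e e' => decide (ekey G u₀ e ≤ ekey G u₀ e'))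
      (fun a b c h1 h2 => by simp_all; omega)
      (fun a b => by simp [le_total])
      hfin.toFinset.toList
    rw [← hes] at hp
    intro i j hi hj hij
    have := List.pairwise_iff_getElem.mp hp i j hi hj hij
    simpa using this
  refine ⟨hFG, es, hnd, hmem, ?_⟩
  intro i
  set K := F ⊔ SimpleGraph.fromEdgeSet {e | e ∈ es.take ((i : ℕ) + 1)} with hK
  -- the current edge
  have hi : (i : ℕ) < es.length := i.2
  have heget : es.get i = es[(i : ℕ)] := rfl
  have hememb : es[(i : ℕ)] ∈ G.edgeSet \ F.edgeSet := (hmem _).mp (List.getElem_mem hi)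
  -- helper: an edge of G whose key is smaller than the key of es[i] gives a K-adjacency
  have hsmall : ∀ p q : V, G.Adj p q → ekey G u₀ s(p, q) < ekey G u₀ es[(i : ℕ)] →
      K.Adj p q := by
    intro p q hpq hlt
    by_cases h0 : s(p, q) = s(u₀, v₀)
    · refine (SimpleGraph.sup_adj _ _ _ _).mpr (Or.inl ?_)
      exact (SimpleGraph.fromEdgeSet_adj _).mpr ⟨Set.mem_singleton_iff.mpr h0, hpq.ne⟩
    · have hmemes : s(p, q) ∈ es := (hmem _).mpr ⟨G.mem_edgeSet.mpr hpq, by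
        rw [hF, SimpleGraph.edgeSet_fromEdgeSet]
        rintro ⟨h1, -⟩
        exact h0 h1⟩
      obtain ⟨j, hj, hje⟩ := List.getElem_of_mem hmemes
      have hjlt : j < (i : ℕ) := by
        by_contra hji
        push_neg at hji
        rcases lt_or_eq_of_le hji with h | h
        · exact absurd (hsorted _ _ hi hj h) (by rw [hje]; omega)
        · subst h
          rw [← hje] at hlt
          exact lt_irrefl _ hlt
      refine (SimpleGraph.sup_adj _ _ _ _).mpr (Or.inr ?_)
      refine (SimpleGraph.fromEdgeSet_adj _).mpr ⟨?_, hpq.ne⟩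
      have htl : j < (es.take ((i : ℕ) + 1)).length := by
        rw [List.length_take]; omega
      have : (es.take ((i : ℕ) + 1))[j] = s(p, q) := by rw [List.getElem_take]; exact hje
      exact this ▸ List.getElem_mem htl
  -- K contains es[i] itself
  have hself : ∀ p q : V, s(p, q) = es[(i : ℕ)] → p ≠ q → K.Adj p q := by
    intro p q hpq hne
    refine (SimpleGraph.sup_adj _ _ _ _).mpr (Or.inr ?_)
    refine (SimpleGraph.fromEdgeSet_adj _).mpr ⟨?_, hne⟩
    have htl : (i : ℕ) < (es.take ((i : ℕ) + 1)).length := by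
      rw [List.length_take]; omega
    have : (es.take ((i : ℕ) + 1))[(i : ℕ)] = es[(i : ℕ)] := List.getElem_take
    exact Set.mem_setOf_eq ▸ (hpq ▸ this ▸ List.getElem_mem htl)
  -- decompose es[i]
  obtain ⟨a, b, heab⟩ := sym2_exists_eq es[(i : ℕ)]
  have key_claim : ∀ a b : V, es[(i : ℕ)] = s(a, b) → G.Adj a b →
      G.dist u₀ a ≤ G.dist u₀ b → ContainsCopyWithEdge K (star 2) (es.get i) := by
    intro a b heab hGab hdab
    have hkey : ekey G u₀ es[(i : ℕ)] = G.dist u₀ a := by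
      rw [heab, ekey_mk, min_eq_left hdab]
    have hra : G.Reachable u₀ a := hreach a b hGab
    rw [heget, heab]
    rcases Nat.eq_zero_or_pos (G.dist u₀ a) with hd | hd
    · -- a = u₀
      have ha : u₀ = a := by
        rcases SimpleGraph.dist_eq_zero_iff_eq_or_not_reachable.mp hd with h | h
        · exact h
        · exact absurd hra h
      subst ha
      have hbv : b ≠ v₀ := by
        intro h
        subst h
        have := hememb.2
        rw [heab, hF, SimpleGraph.edgeSet_fromEdgeSet] at this
        exact this ⟨rfl, hadj.ne⟩
      exact copy_of_two_edges (hself _ _ heab.symm hGab.ne)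
        ((SimpleGraph.sup_adj _ _ _ _).mpr (Or.inl
          ((SimpleGraph.fromEdgeSet_adj _).mpr ⟨rfl, hadj.ne⟩))) hbv
    · -- positive distance: find earlier neighbour
      obtain ⟨p, hp⟩ := (hra.symm).exists_walk_length_eq_dist
      have hplen : p.length = G.dist u₀ a := by rw [hp, SimpleGraph.dist_comm]
      cases p with
      | nil => rw [← hplen] at hd; simp at hd
      | cons hadj' q =>
        rename_i w
        have hq : G.dist u₀ w < G.dist u₀ a := by
          have h1 : G.dist u₀ w ≤ q.length := by
            rw [SimpleGraph.dist_comm]; exact SimpleGraph.dist_le q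
          have h2 : q.length + 1 = G.dist u₀ a := by
            rw [← hplen]; simp [SimpleGraph.Walk.length_cons]
          omega
        have hkaw : ekey G u₀ s(a, w) < ekey G u₀ es[(i : ℕ)] := by
          rw [ekey_mk, hkey]
          exact lt_of_le_of_lt (min_le_right _ _) hq
        have hKaw : K.Adj a w := hsmall a w hadj' hkaw
        have hKab : K.Adj a b := hself a b heab.symm hGab.ne
        have hbw : b ≠ w := by
          intro h
          subst h
          omega
        exact copy_of_two_edges hKab hKaw hbw
  -- apply wlog
  have hGab : G.Adj a b := by
    have := hememb.1; rw [heab] at this; exact G.mem_edgeSet.mp this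
  rcases le_total (G.dist u₀ a) (G.dist u₀ b) with h | h
  · exact key_claim a b heab hGab h
  · exact key_claim b a (heab.trans (Sym2.eq_swap)) hGab.symm h

lemma forward {V : Type*} {G F : SimpleGraph V} {u₀ v₀ : V}
    (hws : WeaklySaturated G F (star 2)) (hFe : F.edgeSet = {s(u₀, v₀)}) :
    ∀ a b : V, G.Adj a b → G.Reachable u₀ a := by
  obtain ⟨hFG, es, hnd, hmem, hcopy⟩ := hws
  have hG0 : G.Adj u₀ v₀ := by
    have : s(u₀, v₀) ∈ G.edgeSet := SimpleGraph.edgeSet_mono hFG (by rw [hFe]; rfl)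
    exact this
  have main : ∀ n : ℕ, ∀ e ∈ es.take n, ∀ x ∈ e, G.Reachable u₀ x := by
    intro n
    induction n with
    | zero => simp
    | succ n ih =>
      by_cases hn : n < es.length
      · rw [List.take_succ] at *
        intro e he x hx
        rw [List.mem_append] at he
        rcases he with he | he
        · exact ih e he x hx
        · have hget : es[n]? = some es[n] := List.getElem?_eq_getElem hn
          rw [hget] at he
          simp only [Option.toList_some, List.mem_singleton] at he
          subst he
          -- use the copy condition at index n
          obtain ⟨c, y, z, hyz, hcy, hcz, hce⟩ := copy_extract (hcopy ⟨n, hn⟩)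
          have hgetn : es.get ⟨n, hn⟩ = es[n] := rfl
          rw [hgetn] at hce
          -- es[n] = s(c, y).  Show c is reachable from u₀.
          have hcz' : F.Adj c z ∨ s(c, z) ∈ es.take (n + 1) := by
            rcases (SimpleGraph.sup_adj _ _ _ _).mp hcz with h | h
            · exact Or.inl h
            · exact Or.inr ((SimpleGraph.fromEdgeSet_adj _).mp h).1
          have hcreach : G.Reachable u₀ c := by
            rcases hcz' with h | h
            · have : s(c, z) = s(u₀, v₀) := by
                have := F.mem_edgeSet.mpr h
                rw [hFe] at this; exact this
              rcases Sym2.eq_iff.mp this with ⟨hc, _⟩ | ⟨hc, _⟩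
              · exact hc ▸ SimpleGraph.Reachable.refl _
              · exact hc ▸ hG0.reachable
            · rw [List.take_succ, hget, List.mem_append] at h
              rcases h with h | h
              · exact ih _ h c (Sym2.mem_mk_left c z)
              · simp only [Option.toList_some, List.mem_singleton] at h
                rw [hce] at h
                exfalso
                rcases Sym2.eq_iff.mp h with ⟨_, hzy⟩ | ⟨hcy', _⟩
                · exact hyz hzy.symm
                · exact hcy.ne hcy'
          -- es[n] ∈ G.edgeSet
          have hGn : es[n] ∈ G.edgeSet := by
            have : es[n] ∈ es := List.getElem_mem hn
            exact ((hmem _).mp this).1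
          rw [hce] at hGn
          have hGcy : G.Adj c y := hGn
          rw [hce] at hx
          rcases Sym2.mem_iff.mp hx with rfl | rfl
          · exact hcreach
          · exact hcreach.trans hGcy.reachable
      · intro e he
        rw [List.take_succ, List.getElem?_eq_none (le_of_not_gt hn), Option.toList_none,
          List.append_nil] at he
        exact ih e he
  intro a b hab
  by_cases h0 : s(a, b) = s(u₀, v₀)
  · rcases Sym2.eq_iff.mp h0 with ⟨rfl, _⟩ | ⟨rfl, _⟩
    · exact SimpleGraph.Reachable.refl _
    · exact hG0.reachable
  · have : s(a, b) ∈ es := by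
      rw [hmem]
      exact ⟨G.mem_edgeSet.mpr hab, by rw [hFe]; exact h0⟩
    exact main es.length s(a, b) (by rw [List.take_length]; exact this) a (Sym2.mem_mk_left a b)

/-- `wsat(G, K_{1,2}) = 1` iff exactly one connected component of `G` contains
an edge. -/
theorem stmt_17 {V : Type*} [Fintype V] (G : SimpleGraph V) :
    wsat G (star 2) = 1 ↔
      ∃! c : G.ConnectedComponent, ∃ u v : V, G.Adj u v ∧ G.connectedComponentMk u = c := by
  classical
  set S : Set ℕ := {m | ∃ F, WeaklySaturated G F (star 2) ∧ F.edgeSet.ncard = m} with hS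
  have hw : wsat G (star 2) = sInf S := rfl
  constructor
  · intro h
    rw [hw] at h
    have hne : S.Nonempty := by
      by_contra hemp
      rw [Set.not_nonempty_iff_eq_empty] at hemp
      rw [hemp, Nat.sInf_empty] at h
      exact one_ne_zero h.symm
    have h1 : 1 ∈ S := h ▸ Nat.sInf_mem hne
    obtain ⟨F, hws, hcard⟩ := h1
    obtain ⟨e₀, he₀⟩ := Set.ncard_eq_one.mp hcard
    obtain ⟨u₀, v₀, he⟩ := sym2_exists_eq e₀
    subst he
    have hG0 : G.Adj u₀ v₀ :=
      G.mem_edgeSet.mp (SimpleGraph.edgeSet_mono hws.1 (he₀ ▸ rfl))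
    have hreach := forward hws he₀
    refine ⟨G.connectedComponentMk u₀, ⟨u₀, v₀, hG0, rfl⟩, ?_⟩
    rintro c' ⟨u, v, huv, hc⟩
    rw [← hc]
    exact SimpleGraph.ConnectedComponent.sound (hreach u v huv).symm
  · rintro ⟨c, ⟨u₀, v₀, hadj, hcu⟩, huniq⟩
    have hreach : ∀ a b : V, G.Adj a b → G.Reachable u₀ a := by
      intro a b hab
      have h1 : G.connectedComponentMk a = c := huniq _ ⟨a, b, hab, rfl⟩
      exact SimpleGraph.ConnectedComponent.exact (hcu.trans h1.symm)
    have hFe : (SimpleGraph.fromEdgeSet {s(u₀, v₀)}).edgeSet = {s(u₀, v₀)} := by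
      rw [SimpleGraph.edgeSet_fromEdgeSet]
      ext e
      simp only [Set.mem_diff, Set.mem_singleton_iff, Set.mem_setOf_eq]
      constructor
      · rintro ⟨h, -⟩; exact h
      · rintro rfl; exact ⟨rfl, by simp [hadj.ne]⟩
    have h1mem : 1 ∈ S :=
      ⟨SimpleGraph.fromEdgeSet {s(u₀, v₀)}, backward hadj hreach,
        by rw [hFe, Set.ncard_singleton]⟩
    have h0 : 0 ∉ S := by
      rintro ⟨F', hws', hc0⟩
      have hFe' : F' = ⊥ :=
        SimpleGraph.edgeSet_eq_empty.mp ((Set.ncard_eq_zero (Set.toFinite _)).mp hc0)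
      subst hFe'
      exact not_ws_zero hadj hws'
    have hle := Nat.sInf_le h1mem
    have hnz : sInf S ≠ 0 := by
      intro hz
      rcases Nat.sInf_eq_zero.mp hz with hmem | hemp
      · exact h0 hmem
      · rw [hemp] at h1mem
        exact h1mem
    rw [hw]
    omega
end WsatRandom
end
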